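/- arXiv:2209.13862 — 7 statements merged into one kernel-verified Lean document; each statement's English description precedes it below -/
import Mathlib

section
/- Let P and Q be pmfs on a finite alphabet 𝒳 with Q(x)>0 for all x. Then the variational characterization of D_∞ also holds for the logarithmic gain function g(t)=log t: sup over finite alphabets 𝒰 and channels P_{U|X} with H(Q_U)>0 of log[ H(P_U) / H(Q_U) ] = D_∞(P‖Q), where H denotes Shannon entropy, P_U(u)=Σ_x P(x)P_{U|X}(u|x), and Q_U(u)=Σ_x Q(x)P_{U|X}(u|x). (Equivalently, the sup of the ratio H(P_U)/H(Q_U) over such channels equals max_x P(x)/Q(x).) -/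
open Finset

/-- A probability mass function on a finite type. -/
def IsPMF {α : Type*} [Fintype α] (p : α → ℝ) : Prop :=
  (∀ a, 0 ≤ p a) ∧ ∑ a, p a = 1

/-- A channel (row-stochastic kernel). -/
def IsChannel {X U : Type*} [Fintype U] (K : X → U → ℝ) : Prop :=
  ∀ x, IsPMF (K x)

/-- The pmf induced on `U` by a pmf `P` on `X` and a channel `K`. -/
noncomputable def push {X U : Type*} [Fintype X] (P : X → ℝ) (K : X → U → ℝ) : U → ℝ :=
  fun u => ∑ x, P x * K x u

/-- Shannon entropy `H(R) = −∑_u R(u) log R(u)` (terms with `R(u) = 0` vanish). -/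
noncomputable def entropy {U : Type*} [Fintype U] (R : U → ℝ) : ℝ :=
  -∑ u, R u * Real.log (R u)

/-- The Rényi divergence of order `∞`: `max_{x : P(x) > 0} log (P(x)/Q(x))`. -/
noncomputable def Dinf {X : Type*} [Fintype X] (P Q : X → ℝ) : ℝ :=
  sSup {v : ℝ | ∃ x, 0 < P x ∧ v = Real.log (P x / Q x)}


lemma entropy_eq {U : Type*} [Fintype U] (R : U → ℝ) :
    entropy R = ∑ u, Real.negMulLog (R u) := by
  simp [entropy, Real.negMulLog, neg_mul]

lemma pmf_le_one {U : Type*} [Fintype U] {R : U → ℝ} (h : IsPMF R) (u : U) : R u ≤ 1 := by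
  rw [← h.2]
  exact Finset.single_le_sum (fun a _ => h.1 a) (mem_univ u)

lemma entropy_nonneg {U : Type*} [Fintype U] {R : U → ℝ} (h : IsPMF R) : 0 ≤ entropy R := by
  rw [entropy_eq]
  exact Finset.sum_nonneg fun u _ => Real.negMulLog_nonneg (h.1 u) (pmf_le_one h u)

lemma push_isPMF {X U : Type*} [Fintype X] [Fintype U] {P : X → ℝ} {K : X → U → ℝ}
    (hP : IsPMF P) (hK : IsChannel K) : IsPMF (push P K) := by
  constructor
  · intro u; exact Finset.sum_nonneg fun x _ => mul_nonneg (hP.1 x) ((hK x).1 u)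
  · calc ∑ u, push P K u = ∑ x, ∑ u : U, P x * K x u := Finset.sum_comm
      _ = ∑ x, P x * ∑ u : U, K x u := by simp [Finset.mul_sum]
      _ = ∑ x, P x := Finset.sum_congr rfl fun x _ => by rw [(hK x).2, mul_one]
      _ = 1 := hP.2

lemma entropy_le_mul {U : Type*} [Fintype U] {p q : U → ℝ} {M : ℝ}
    (hp : IsPMF p) (hq : IsPMF q) (hM : 1 ≤ M) (hle : ∀ u, p u ≤ M * q u) :
    entropy p ≤ M * entropy q := by
  rcases eq_or_lt_of_le hM with hM1 | hM1
  · have hpq : p = q := by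
      have hsum : ∑ u, (q u - p u) = 0 := by
        rw [Finset.sum_sub_distrib, hp.2, hq.2, sub_self]
      funext u
      have h0 := (Finset.sum_eq_zero_iff_of_nonneg (fun u _ => by
        have := hle u; rw [← hM1, one_mul] at this; linarith)).1 hsum u (mem_univ u)
      linarith
    rw [← hM1, one_mul, hpq]
  · have hM0 : 0 < M := lt_trans one_pos hM1
    have hM10 : 0 < M - 1 := by linarith
    set r : U → ℝ := fun u => (M * q u - p u) / (M - 1) with hr
    have hr0 : ∀ u, 0 ≤ r u := fun u => div_nonneg (by have := hle u; linarith) hM10.le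
    have hrsum : ∑ u, r u = 1 := by
      rw [hr, ← Finset.sum_div, Finset.sum_sub_distrib, ← Finset.mul_sum, hp.2, hq.2]
      field_simp
    have h1m : 0 ≤ 1 - M⁻¹ := by
      rw [sub_nonneg, ← one_div]; exact (div_le_one hM0).mpr hM
    have key : ∀ u, M⁻¹ * Real.negMulLog (p u) + (1 - M⁻¹) * Real.negMulLog (r u)
        ≤ Real.negMulLog (q u) := by
      intro u
      have hmem : M⁻¹ * p u + (1 - M⁻¹) * r u = q u := by
        rw [hr]; field_simp; ring
      have hconc : M⁻¹ • Real.negMulLog (p u) + (1 - M⁻¹) • Real.negMulLog (r u)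
          ≤ Real.negMulLog (M⁻¹ • p u + (1 - M⁻¹) • r u) :=
        Real.concaveOn_negMulLog.2 (Set.mem_Ici.2 (hp.1 u)) (Set.mem_Ici.2 (hr0 u))
          (by positivity) h1m (by ring)
      simpa [smul_eq_mul, hmem] using hconc
    have hsum := Finset.sum_le_sum fun u (_ : u ∈ univ) => key u
    rw [Finset.sum_add_distrib, ← Finset.mul_sum, ← Finset.mul_sum] at hsum
    have hrent : 0 ≤ ∑ u, Real.negMulLog (r u) := by
      have h := entropy_nonneg ⟨hr0, hrsum⟩; rwa [entropy_eq] at h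
    rw [entropy_eq, entropy_eq]
    have hx : 0 ≤ (1 - M⁻¹) * ∑ u, Real.negMulLog (r u) := mul_nonneg h1m hrent
    have h2 : M⁻¹ * ∑ u, Real.negMulLog (p u) ≤ ∑ u, Real.negMulLog (q u) := by linarith
    calc ∑ u, Real.negMulLog (p u) = M * (M⁻¹ * ∑ u, Real.negMulLog (p u)) := by
          field_simp
      _ ≤ M * ∑ u, Real.negMulLog (q u) := mul_le_mul_of_nonneg_left h2 hM0.le

noncomputable def splitK {X : Type*} [DecidableEq X] (x0 : X) (n : ℕ) :
    X → Option (Fin n) → ℝ :=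
  fun x u => Option.casesOn u (if x = x0 then 0 else 1) fun _ => if x = x0 then (n:ℝ)⁻¹ else 0

@[simp] lemma splitK_none {X : Type*} [DecidableEq X] (x0 : X) (n : ℕ) (x : X) :
    splitK x0 n x none = if x = x0 then 0 else 1 := rfl

@[simp] lemma splitK_some {X : Type*} [DecidableEq X] (x0 : X) (n : ℕ) (x : X) (i : Fin n) :
    splitK x0 n x (some i) = if x = x0 then (n:ℝ)⁻¹ else 0 := rfl

lemma splitK_isChannel {X : Type*} [DecidableEq X] (x0 : X) {n : ℕ} (hn : 1 ≤ n) :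
    IsChannel (splitK x0 n) := by
  have hn0 : (0:ℝ) < n := by exact_mod_cast hn
  intro x
  constructor
  · intro u; cases u <;> simp <;> split_ifs <;> positivity
  · rw [univ_option, Finset.sum_insertNone]
    by_cases hx : x = x0 <;>
      simp [hx, Finset.sum_const, Finset.card_univ, mul_inv_cancel₀ hn0.ne']

lemma push_splitK_none {X : Type*} [Fintype X] [DecidableEq X] {P : X → ℝ} (hP : IsPMF P)
    (x0 : X) (n : ℕ) : push P (splitK x0 n) none = 1 - P x0 := by
  have : ∀ x, P x * splitK x0 n x none = P x - (if x = x0 then P x else 0) := by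
    intro x; simp only [splitK_none]; split_ifs <;> ring
  rw [push]
  rw [Finset.sum_congr rfl fun x _ => this x, Finset.sum_sub_distrib, hP.2,
    Finset.sum_ite_eq' univ x0 P, if_pos (mem_univ x0)]

lemma push_splitK_some {X : Type*} [Fintype X] [DecidableEq X] (P : X → ℝ)
    (x0 : X) (n : ℕ) (i : Fin n) : push P (splitK x0 n) (some i) = P x0 * (n:ℝ)⁻¹ := by
  have : ∀ x, P x * splitK x0 n x (some i) = if x = x0 then P x0 * (n:ℝ)⁻¹ else 0 := by
    intro x; simp only [splitK_some]; split_ifs with h <;> simp [h]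
  rw [push, Finset.sum_congr rfl fun x _ => this x, Finset.sum_ite_eq' univ x0,
    if_pos (mem_univ x0)]

lemma split_entropy {X : Type*} [Fintype X] [DecidableEq X] {P : X → ℝ} (hP : IsPMF P)
    (x0 : X) {n : ℕ} (hn : 1 ≤ n) :
    entropy (push P (splitK x0 n))
      = (Real.negMulLog (1 - P x0) + Real.negMulLog (P x0)) + P x0 * Real.log n := by
  have hn0 : (0:ℝ) < n := by exact_mod_cast hn
  rw [entropy_eq, univ_option, Finset.sum_insertNone, push_splitK_none hP]
  have : ∀ i : Fin n, Real.negMulLog (push P (splitK x0 n) (some i))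
      = Real.negMulLog (P x0 * (n:ℝ)⁻¹) := fun i => by rw [push_splitK_some]
  rw [Finset.sum_congr rfl fun i _ => this i, Finset.sum_const, Finset.card_univ,
    Fintype.card_fin, nsmul_eq_mul]
  have : (n:ℝ) * Real.negMulLog (P x0 * (n:ℝ)⁻¹)
      = Real.negMulLog (P x0) + P x0 * Real.log n := by
    rw [Real.negMulLog_mul]
    simp only [Real.negMulLog, Real.log_inv]
    field_simp
  rw [this]; ring

open Filter Topology

/-- The variational characterization of `D_∞` also holds for the logarithmic
gain function `g(t) = log t`:
`sup_{U, P_{U|X} : H(Q_U) > 0} log (H(P_U)/H(Q_U)) = D_∞(P‖Q)`. -/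
theorem stmt10 {X : Type} [Fintype X]
    (P Q : X → ℝ) (hP : IsPMF P) (hQ : IsPMF Q) (hQpos : ∀ x, 0 < Q x) :
    IsLUB
      {r : ℝ | ∃ (U : Type) (iU : Fintype U) (K : X → U → ℝ),
        @IsChannel X U iU K ∧ 0 < @entropy U iU (push Q K) ∧
        r = Real.log (@entropy U iU (push P K) / @entropy U iU (push Q K))}
      (Dinf P Q) := by
  classical
  set T : Set ℝ := {v : ℝ | ∃ x, 0 < P x ∧ v = Real.log (P x / Q x)} with hT
  have hDdef : Dinf P Q = sSup T := rfl
  have hTfin : T.Finite := by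
    apply (Set.finite_range fun x => Real.log (P x / Q x)).subset
    rintro v ⟨x, _, rfl⟩; exact ⟨x, rfl⟩
  have hTne : T.Nonempty := by
    obtain ⟨x, hx⟩ : ∃ x, 0 < P x := by
      by_contra h; push_neg at h
      have h0 : ∑ a, P a = 0 := Finset.sum_eq_zero fun a _ => le_antisymm (h a) (hP.1 a)
      rw [hP.2] at h0; norm_num at h0
    exact ⟨_, x, hx, rfl⟩
  have hmem : Dinf P Q ∈ T := by rw [hDdef]; exact hTne.csSup_mem hTfin
  have hub : ∀ x, 0 < P x → Real.log (P x / Q x) ≤ Dinf P Q :=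
    fun x hx => le_csSup hTfin.bddAbove ⟨x, hx, rfl⟩
  have hPMQ : ∀ x, P x ≤ Real.exp (Dinf P Q) * Q x := by
    intro x
    rcases lt_or_ge 0 (P x) with hx | hx
    · have h1 : P x / Q x ≤ Real.exp (Dinf P Q) := by
        rw [← Real.exp_log (div_pos hx (hQpos x))]
        exact Real.exp_le_exp.2 (hub x hx)
      exact (div_le_iff₀ (hQpos x)).1 h1
    · exact le_trans hx (mul_nonneg (Real.exp_pos _).le (hQpos x).le)
  have hM1 : 1 ≤ Real.exp (Dinf P Q) := by
    calc (1:ℝ) = ∑ a, P a := hP.2.symm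
      _ ≤ ∑ a, Real.exp (Dinf P Q) * Q a := Finset.sum_le_sum fun a _ => hPMQ a
      _ = Real.exp (Dinf P Q) := by rw [← Finset.mul_sum, hQ.2, mul_one]
  have hD0 : 0 ≤ Dinf P Q := by
    have h := Real.log_le_log one_pos hM1
    rwa [Real.log_one, Real.log_exp] at h
  constructor
  · rintro r ⟨U, iU, K, hK, hQU, rfl⟩
    have hp := push_isPMF hP hK
    have hq := push_isPMF hQ hK
    have hple : ∀ u, push P K u ≤ Real.exp (Dinf P Q) * push Q K u := by
      intro u
      rw [push, push, Finset.mul_sum]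
      exact Finset.sum_le_sum fun x _ => by
        rw [← mul_assoc]; exact mul_le_mul_of_nonneg_right (hPMQ x) ((hK x).1 u)
    have hent := entropy_le_mul hp hq hM1 hple
    have hratio : entropy (push P K) / entropy (push Q K) ≤ Real.exp (Dinf P Q) := by
      rw [div_le_iff₀ hQU]; exact hent
    rcases le_or_gt (entropy (push P K) / entropy (push Q K)) 1 with h1 | h1
    · have h2 : Real.log (entropy (push P K) / entropy (push Q K)) ≤ 0 :=
        Real.log_nonpos (div_nonneg (entropy_nonneg hp) hQU.le) h1
      linarith
    · calc Real.log (entropy (push P K) / entropy (push Q K))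
          ≤ Real.log (Real.exp (Dinf P Q)) := Real.log_le_log (lt_trans one_pos h1) hratio
        _ = Dinf P Q := Real.log_exp _
  · intro b hb
    obtain ⟨x0, hx0, hDeq⟩ := hmem
    have ha : 0 < P x0 := hx0
    have hc : 0 < Q x0 := hQpos x0
    have ha1 : P x0 ≤ 1 := pmf_le_one hP x0
    have hc1 : Q x0 ≤ 1 := pmf_le_one hQ x0
    set Ca : ℝ := Real.negMulLog (1 - P x0) + Real.negMulLog (P x0) with hCa
    set Cc : ℝ := Real.negMulLog (1 - Q x0) + Real.negMulLog (Q x0) with hCc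
    have hCa0 : 0 ≤ Ca := add_nonneg
      (Real.negMulLog_nonneg (by linarith) (by linarith)) (Real.negMulLog_nonneg ha.le ha1)
    have hCc0 : 0 ≤ Cc := add_nonneg
      (Real.negMulLog_nonneg (by linarith) (by linarith)) (Real.negMulLog_nonneg hc.le hc1)
    have hbdd : ∀ n : ℕ, 2 ≤ n →
        Real.log ((Ca + P x0 * Real.log n) / (Cc + Q x0 * Real.log n)) ≤ b := by
      intro n hn2
      have hn1 : 1 ≤ n := le_trans (by norm_num) hn2
      have hlog : 0 < Real.log n := Real.log_pos (by exact_mod_cast hn2)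
      have hQent : 0 < entropy (push Q (splitK x0 n)) := by
        rw [split_entropy hQ x0 hn1, ← hCc]
        nlinarith [mul_pos hc hlog]
      refine hb ⟨Option (Fin n), inferInstance, splitK x0 n, splitK_isChannel x0 hn1, hQent, ?_⟩
      rw [split_entropy hP x0 hn1, split_entropy hQ x0 hn1, ← hCa, ← hCc]
    have hL : Tendsto (fun n : ℕ => Real.log n) atTop atTop :=
      Real.tendsto_log_atTop.comp tendsto_natCast_atTop_atTop
    have h1 : Tendsto (fun n : ℕ => Ca / Real.log n + P x0) atTop (𝓝 (0 + P x0)) :=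
      (tendsto_const_nhds.div_atTop hL).add tendsto_const_nhds
    have h2 : Tendsto (fun n : ℕ => Cc / Real.log n + Q x0) atTop (𝓝 (0 + Q x0)) :=
      (tendsto_const_nhds.div_atTop hL).add tendsto_const_nhds
    have hg : Tendsto (fun n : ℕ => (Ca / Real.log n + P x0) / (Cc / Real.log n + Q x0))
        atTop (𝓝 ((0 + P x0) / (0 + Q x0))) :=
      h1.div h2 (by rw [zero_add]; exact hc.ne')
    rw [zero_add, zero_add] at hg
    have hgt : Tendsto (fun n : ℕ => (Ca + P x0 * Real.log n) / (Cc + Q x0 * Real.log n))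
        atTop (𝓝 (P x0 / Q x0)) := by
      refine hg.congr' ?_
      filter_upwards [eventually_ge_atTop 2] with n hn
      have hlog : 0 < Real.log n := Real.log_pos (by exact_mod_cast hn)
      have hd1 : 0 < Cc / Real.log n + Q x0 := by positivity
      have hd2 : 0 < Cc + Q x0 * Real.log n := by nlinarith [mul_pos hc hlog]
      rw [div_eq_div_iff hd1.ne' hd2.ne']
      field_simp
      try ring
    have hlogt : Tendsto
        (fun n : ℕ => Real.log ((Ca + P x0 * Real.log n) / (Cc + Q x0 * Real.log n)))
        atTop (𝓝 (Real.log (P x0 / Q x0))) :=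
      (Real.continuousAt_log (div_pos ha hc).ne').tendsto.comp hgt
    rw [hDeq]
    refine le_of_tendsto hlogt ?_
    filter_upwards [eventually_ge_atTop 2] with n hn
    exact hbdd n hn
end

section
/- Let P and P̃ be pmfs on a finite alphabet 𝒳 with P̃(x)>0 for all x, let α∈(0,1)∪(1,∞), and let k ≥ 1 be a real number. Then the expected α-loss admits the decomposition Σ_x P(x)·(α/(α−1))·(1 − (k·P̃(x))^{(α−1)/α}) = (α/(α−1))·(1 − k^{(α−1)/α}·e^{((1−α)/α)H_α(P)}) + (α/(α−1))·k^{(α−1)/α}·(Σ_x P(x)^α)^{1/α}·(1 − e^{((1−α)/α)·D_{1/α}(P^{(α)}‖P̃)}), where P^{(α)}(x)=P(x)^α/Σ_{x'}P(x')^α is the α-tilted distribution of P. -/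
open Finset

/-- Decomposition of the expected `α`-loss under `k` guesses:
`∑_x P(x) ℓ_α(k P̃(x)) = (α/(α−1))(1 − k^{(α−1)/α} e^{((1−α)/α) H_α(P)})
  + (α/(α−1)) k^{(α−1)/α} (∑_x P(x)^α)^{1/α} (1 − e^{((1−α)/α) D_{1/α}(P^{(α)} ‖ P̃)})`,
where `H_α(P) = (1/(1−α)) log ∑_x P(x)^α` is the Rényi entropy of order `α`,
`P^{(α)}(x) = P(x)^α / ∑_{x'} P(x')^α` is the tilted distribution, and
`D_β(R‖S) = (1/(β−1)) log ∑_x R(x)^β S(x)^{1−β}` with `β = 1/α`. -/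
theorem stmt11 {X : Type} [Fintype X]
    (P Pt : X → ℝ) (hP : IsPMF P) (hPt : IsPMF Pt) (hPtpos : ∀ x, 0 < Pt x)
    (α : ℝ) (hα0 : 0 < α) (hα1 : α ≠ 1) (k : ℝ) (hk : 1 ≤ k) :
    ∑ x, P x * ((α / (α - 1)) * (1 - (k * Pt x) ^ ((α - 1) / α)))
      = (α / (α - 1)) * (1 - k ^ ((α - 1) / α) *
          Real.exp (((1 - α) / α) * ((1 / (1 - α)) * Real.log (∑ x, P x ^ α))))
        + (α / (α - 1)) * k ^ ((α - 1) / α) * (∑ x, P x ^ α) ^ (1 / α) *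
          (1 - Real.exp (((1 - α) / α) * ((1 / (1 / α - 1)) *
            Real.log (∑ x, (P x ^ α / ∑ x', P x' ^ α) ^ (1 / α) *
              Pt x ^ (1 - 1 / α))))) := by
  obtain ⟨hPnn, hPsum⟩ := hP
  have hαne : α ≠ 0 := ne_of_gt hα0
  have h1α : (1 : ℝ) - α ≠ 0 := sub_ne_zero.mpr (Ne.symm hα1)
  have hk0 : (0 : ℝ) < k := lt_of_lt_of_le one_pos hk
  obtain ⟨x0, hx0⟩ : ∃ x, 0 < P x := by
    by_contra h
    push_neg at h
    have h0 : ∑ x, P x = 0 :=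
      Finset.sum_eq_zero fun x _ => le_antisymm (h x) (hPnn x)
    rw [h0] at hPsum
    exact one_ne_zero hPsum.symm
  set S := ∑ x, P x ^ α with hSdef
  have hS : 0 < S :=
    Finset.sum_pos' (fun x _ => Real.rpow_nonneg (hPnn x) α)
      ⟨x0, Finset.mem_univ x0, Real.rpow_pos_of_pos hx0 α⟩
  set e := (α - 1) / α with hedef
  set A := ∑ x, P x * Pt x ^ e with hAdef
  have hSe : (0 : ℝ) < S ^ (1 / α) := Real.rpow_pos_of_pos hS _
  -- rewrite each term of the divergence sum
  have hterm : ∀ x, (P x ^ α / S) ^ (1 / α) * Pt x ^ (1 - 1 / α)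
      = P x * Pt x ^ e / S ^ (1 / α) := by
    intro x
    have h1 : (1 : ℝ) - 1 / α = e := by
      rw [hedef]; field_simp
    rw [Real.div_rpow (Real.rpow_nonneg (hPnn x) α) hS.le,
      ← Real.rpow_mul (hPnn x), mul_one_div, div_self hαne, Real.rpow_one, h1]
    ring
  have hTsum : ∑ x, (P x ^ α / S) ^ (1 / α) * Pt x ^ (1 - 1 / α) = A / S ^ (1 / α) := by
    rw [Finset.sum_congr rfl fun x _ => hterm x, ← Finset.sum_div, hAdef]
  have hA : 0 < A :=
    Finset.sum_pos' (fun x _ => mul_nonneg (hPnn x) (Real.rpow_nonneg (hPtpos x).le _))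
      ⟨x0, Finset.mem_univ x0, mul_pos hx0 (Real.rpow_pos_of_pos (hPtpos x0) _)⟩
  -- the first exponential is S ^ (1/α)
  have hexp1 : Real.exp (((1 - α) / α) * ((1 / (1 - α)) * Real.log S)) = S ^ (1 / α) := by
    have hc : ((1 - α) / α) * ((1 / (1 - α)) * Real.log S) = Real.log S * (1 / α) := by
      field_simp
    rw [hc, ← Real.rpow_def_of_pos hS]
  -- the second exponential is A / S^(1/α)
  have hinvα : (1 : ℝ) / α - 1 ≠ 0 := by
    have : (1 : ℝ) / α - 1 = (1 - α) / α := by field_simp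
    rw [this]
    exact div_ne_zero h1α hαne
  have hexp2 : Real.exp (((1 - α) / α) * ((1 / (1 / α - 1)) *
      Real.log (∑ x, (P x ^ α / S) ^ (1 / α) * Pt x ^ (1 - 1 / α)))) = A / S ^ (1 / α) := by
    rw [hTsum]
    have hc : ((1 - α) / α) * ((1 / (1 / α - 1)) * Real.log (A / S ^ (1 / α)))
        = Real.log (A / S ^ (1 / α)) := by
      field_simp
    rw [hc, Real.exp_log (div_pos hA hSe)]
  rw [hexp1, hexp2]
  -- expand the left-hand side
  have hL : ∑ x, P x * ((α / (α - 1)) * (1 - (k * Pt x) ^ e))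
      = (α / (α - 1)) - (α / (α - 1)) * k ^ e * A := by
    have hx : ∀ x, P x * ((α / (α - 1)) * (1 - (k * Pt x) ^ e))
        = (α / (α - 1)) * P x - (α / (α - 1)) * k ^ e * (P x * Pt x ^ e) := by
      intro x
      rw [Real.mul_rpow hk0.le (hPtpos x).le]
      ring
    rw [Finset.sum_congr rfl fun x _ => hx x, Finset.sum_sub_distrib,
      ← Finset.mul_sum, ← Finset.mul_sum, hPsum, mul_one, hAdef]
  rw [hL]
  have hdiv : S ^ (1 / α) * (A / S ^ (1 / α)) = A := by
    field_simp
  linear_combination (α / (α - 1) * k ^ e) * hdiv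
end

section
/- Let P_X be a pmf supported on 𝒳={x_1,…,x_n} with p_1 ≥ p_2 ≥ … ≥ p_n > 0 where p_i=P_X(x_i), let α∈(0,1)∪(1,∞), and let k be an integer with 1 ≤ k < n. Then the minimal expected α-loss under k guesses equals ME_α^{(k)}(P_X) = (α/(α−1))·Σ_{i=s*}^{n} p_i·(1 − ((k−s*+1)·p_i^α / Σ_{j=s*}^{n} p_j^α)^{(α−1)/α}), where s* = min{ r∈{1,…,k} : (k−r+1)·p_r^α ≤ Σ_{i=r}^{n} p_i^α }. -/
open Finset

open Classical in
/-- The probability that a `k`-guess strategy `Q` covers `u`, i.e. the probability that some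
guess equals `u`. -/
noncomputable def coversG {U : Type*} [Fintype U] {k : ℕ} (Q : (Fin k → U) → ℝ) (u : U) : ℝ :=
  ∑ a : Fin k → U, if ∃ j, a j = u then Q a else 0

/-- The `α`-loss `ℓ_α(p) = (α/(α−1))(1 − p^{(α−1)/α})`, valued in `EReal` so that
`ℓ_α(0) = ⊤` for `α < 1` (where the real-valued formula would be meaningless). -/
noncomputable def alphaLossE (α p : ℝ) : EReal :=
  if p = 0 ∧ α < 1 then ⊤
  else (((α / (α - 1)) * (1 - p ^ ((α - 1) / α)) : ℝ) : EReal)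

/-- `s* = min{ r ∈ {1,…,k} : (k−r+1) p_r^α ≤ ∑_{i=r}^n p_i^α }`. -/
noncomputable def sstar (α : ℝ) (p : ℕ → ℝ) (k n : ℕ) : ℕ :=
  sInf {r : ℕ | 1 ≤ r ∧ r ≤ k ∧
    ((k : ℝ) - r + 1) * p r ^ α ≤ ∑ i ∈ Finset.Icc r n, p i ^ α}

/-- `(α/(α−1)) ∑_{i=s*}^n p_i (1 − ((k−s*+1) p_i^α / ∑_{j=s*}^n p_j^α)^{(α−1)/α})`. -/
noncomputable def MEalpha (α : ℝ) (p : ℕ → ℝ) (k n : ℕ) : ℝ :=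
  (α / (α - 1)) *
    ∑ i ∈ Finset.Icc (sstar α p k n) n,
      p i * (1 - (((k : ℝ) - (sstar α p k n : ℕ) + 1) * p i ^ α /
        ∑ j ∈ Finset.Icc (sstar α p k n) n, p j ^ α) ^ ((α - 1) / α))


section AuxLemmas

open Real

set_option maxHeartbeats 1000000

lemma coe_sum' {ι : Type*} (s : Finset ι) (f : ι → ℝ) :
    ((∑ i ∈ s, f i : ℝ) : EReal) = ∑ i ∈ s, ((f i : ℝ) : EReal) := by
  induction s using Finset.cons_induction with
  | empty => simp
  | cons a s ha ih => rw [Finset.sum_cons, Finset.sum_cons, EReal.coe_add, ih]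

lemma tangent {α : ℝ} (hα0 : 0 < α) (hα1 : α ≠ 1) {q t : ℝ} (ht : 0 < t) (hq : 0 ≤ q)
    (hq' : 0 < q ∨ 1 < α) :
    (α/(α-1)) * (1 - t ^ ((α-1)/α)) - t ^ ((α-1)/α - 1) * (q - t)
      ≤ (α/(α-1)) * (1 - q ^ ((α-1)/α)) := by
  set β := (α-1)/α with hβ
  have hαne : α ≠ 0 := ne_of_gt hα0
  have hcβ : (α/(α-1)) * β = 1 := by
    rw [hβ, div_mul_div_comm, mul_comm α (α-1)]
    exact div_self (by intro h; rcases mul_eq_zero.1 h with h | h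
                       · exact hα1 (by linarith [sub_eq_zero.mp h])
                       · exact hαne h)
  have htβ : (0:ℝ) < t ^ β := rpow_pos_of_pos ht β
  have hqt : q ^ β = t ^ β * (q/t) ^ β := by
    rw [Real.div_rpow hq ht.le, mul_div_cancel₀]
    exact ne_of_gt htβ
  have htt : t ^ (β - 1) = t ^ β / t := by
    rw [Real.rpow_sub ht, Real.rpow_one]
  rcases lt_or_gt_of_ne hα1 with hlt | hgt
  · have hqpos : 0 < q := hq'.resolve_right (by linarith)
    have hβneg : β < 0 := div_neg_of_neg_of_pos (by linarith) hα0
    have hcneg : α/(α-1) < 0 := div_neg_of_pos_of_neg hα0 (by linarith)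
    have hx : 0 < q / t := div_pos hqpos ht
    have key : 1 + β * (q/t - 1) ≤ (q/t) ^ β := by
      have h1 : (q/t) ^ β = Real.exp (Real.log (q/t) * β) := by
        rw [Real.rpow_def_of_pos hx]
      have h2 : Real.log (q/t) ≤ q/t - 1 := Real.log_le_sub_one_of_pos hx
      have h3 : β * (q/t - 1) ≤ β * Real.log (q/t) :=
        mul_le_mul_of_nonpos_left h2 hβneg.le
      have h4 : 1 + Real.log (q/t) * β ≤ Real.exp (Real.log (q/t) * β) := by
        have := Real.add_one_le_exp (Real.log (q/t) * β); linarith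
      rw [h1]; nlinarith
    have key2 : t ^ β + β * (t ^ (β-1) * (q - t)) ≤ q ^ β := by
      rw [hqt, htt]
      have h5 := mul_le_mul_of_nonneg_left key htβ.le
      have he : t ^ β * (1 + β * (q/t - 1)) = t ^ β + β * (t ^ β / t * (q - t)) := by
        field_simp
      linarith [he ▸ h5]
    have h6 := mul_le_mul_of_nonpos_left key2 hcneg.le
    have h7 : (α/(α-1)) * (t ^ β + β * (t^(β-1)*(q-t)))
        = (α/(α-1)) * t^β + ((α/(α-1))*β) * (t^(β-1)*(q-t)) := by ring
    rw [h7, hcβ, one_mul] at h6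
    linarith
  · have hβpos : 0 < β := div_pos (by linarith) hα0
    have hβlt : β < 1 := by rw [hβ, div_lt_one hα0]; linarith
    have hcpos : 0 < α/(α-1) := div_pos hα0 (by linarith)
    have key : (q/t) ^ β ≤ 1 + β * (q/t - 1) := by
      have hs : (-1:ℝ) ≤ q/t - 1 := by
        have : 0 ≤ q/t := div_nonneg hq ht.le
        linarith
      have h8 := rpow_one_add_le_one_add_mul_self hs hβpos.le hβlt.le
      have h9 : 1 + (q/t - 1) = q/t := by ring
      rw [h9] at h8; exact h8
    have key2 : q ^ β ≤ t ^ β + β * (t ^ (β-1) * (q - t)) := by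
      rw [hqt, htt]
      have h5 := mul_le_mul_of_nonneg_left key htβ.le
      have he : t ^ β * (1 + β * (q/t - 1)) = t ^ β + β * (t ^ β / t * (q - t)) := by
        field_simp
      linarith [he ▸ h5]
    have h6 := mul_le_mul_of_nonneg_left key2 hcpos.le
    have h7 : (α/(α-1)) * (t ^ β + β * (t^(β-1)*(q-t)))
        = (α/(α-1)) * t^β + ((α/(α-1))*β) * (t^(β-1)*(q-t)) := by ring
    rw [h7, hcβ, one_mul] at h6
    linarith

lemma exists_weights_int {ι : Type*} [Fintype ι] [DecidableEq ι] (k : ℕ) (q : ι → ℝ)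
    (hint : ∀ i, q i = 0 ∨ q i = 1) (hsum : ∑ i, q i = k) :
    ∃ w : Finset ι → ℝ, (∀ S, 0 ≤ w S) ∧ (∀ S, w S ≠ 0 → S.card = k) ∧
      (∑ S : Finset ι, w S = 1) ∧
      ∀ i, ∑ S ∈ Finset.univ.filter (fun S : Finset ι => i ∈ S), w S = q i := by
  classical
  set S₀ : Finset ι := Finset.univ.filter (fun i => q i = 1) with hS₀
  have hcard : (S₀.card : ℝ) = k := by
    rw [← hsum, Finset.card_filter]
    push_cast
    apply Finset.sum_congr rfl
    intro i _
    rcases hint i with h | h <;> simp [h]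
  have hcardk : S₀.card = k := by exact_mod_cast hcard
  refine ⟨fun S => if S = S₀ then 1 else 0, ?_, ?_, ?_, ?_⟩
  · intro S; dsimp only; split <;> norm_num
  · intro S hS; by_cases h : S = S₀
    · rw [h]; exact hcardk
    · simp [h] at hS
  · rw [Finset.sum_ite_eq' Finset.univ S₀ (fun _ => (1:ℝ))]
    simp
  · intro i
    rw [Finset.sum_ite_eq' (Finset.univ.filter (fun S : Finset ι => i ∈ S)) S₀ (fun _ => (1:ℝ))]
    by_cases h : i ∈ S₀
    · have hq : q i = 1 := by simpa [hS₀] using h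
      simp [h, hq]
    · have hq : q i = 0 := by
        rcases hint i with h0 | h1
        · exact h0
        · exact absurd (by simpa [hS₀] using h1) h
      simp [h, hq]

lemma exists_weights_aux {ι : Type*} [Fintype ι] [DecidableEq ι] (k : ℕ) :
    ∀ N : ℕ, ∀ q : ι → ℝ, (∀ i, 0 ≤ q i) → (∀ i, q i ≤ 1) → (∑ i, q i = k) →
    (Finset.univ.filter (fun i => q i ≠ 0 ∧ q i ≠ 1)).card ≤ N →
    ∃ w : Finset ι → ℝ, (∀ S, 0 ≤ w S) ∧ (∀ S, w S ≠ 0 → S.card = k) ∧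
      (∑ S : Finset ι, w S = 1) ∧
      ∀ i, ∑ S ∈ Finset.univ.filter (fun S : Finset ι => i ∈ S), w S = q i := by
  classical
  intro N
  induction N with
  | zero =>
    intro q h0 h1 hsum hN
    apply exists_weights_int k q _ hsum
    intro i
    by_contra h
    push_neg at h
    have hmem : i ∈ Finset.univ.filter (fun i => q i ≠ 0 ∧ q i ≠ 1) := by simp [h.1, h.2]
    have := Finset.card_pos.2 ⟨i, hmem⟩
    omega
  | succ N ih =>
    intro q h0 h1 hsum hN
    by_cases hempty : (Finset.univ.filter (fun i => q i ≠ 0 ∧ q i ≠ 1)) = ∅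
    · apply exists_weights_int k q _ hsum
      intro i
      by_contra h
      push_neg at h
      have hmem : i ∈ Finset.univ.filter (fun i => q i ≠ 0 ∧ q i ≠ 1) := by simp [h.1, h.2]
      simp [hempty] at hmem
    · obtain ⟨i, hi⟩ := Finset.nonempty_iff_ne_empty.2 hempty
      have hfi : q i ≠ 0 ∧ q i ≠ 1 := by simpa using hi
      have hi0 : 0 < q i := lt_of_le_of_ne (h0 i) (Ne.symm hfi.1)
      have hi1 : q i < 1 := lt_of_le_of_ne (h1 i) hfi.2
      have hexj : ∃ j, j ≠ i ∧ q j ≠ 0 ∧ q j ≠ 1 := by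
        by_contra hno
        push_neg at hno
        have hval : ∀ a ∈ Finset.univ.erase i, q a = if q a = 1 then (1:ℝ) else 0 := by
          intro a ha
          rcases em (q a = 0) with h' | h'
          · have hne : q a ≠ 1 := by rw [h']; norm_num
            simp [h', hne]
          · have h1a := hno a (Finset.ne_of_mem_erase ha) h'
            simp [h1a]
        have hsum' : ∑ a ∈ Finset.univ.erase i, q a =
            ((Finset.univ.erase i).filter (fun a => q a = 1)).card := by
          rw [Finset.sum_congr rfl hval, Finset.sum_boole]
        have htot : q i + ∑ a ∈ Finset.univ.erase i, q a = (k:ℝ) := by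
          rw [Finset.add_sum_erase Finset.univ q (Finset.mem_univ i), hsum]
        set c := ((Finset.univ.erase i).filter (fun a => q a = 1)).card with hc
        rw [hsum'] at htot
        have h1 : (c:ℝ) < k := by linarith
        have h2 : (k:ℝ) < c + 1 := by linarith
        have h1' : c < k := by exact_mod_cast h1
        have h2' : k < c + 1 := by exact_mod_cast h2
        omega
      obtain ⟨j, hji, hfj⟩ := hexj
      have hij : i ≠ j := fun h => hji h.symm
      have hj0 : 0 < q j := lt_of_le_of_ne (h0 j) (Ne.symm hfj.1)
      have hj1 : q j < 1 := lt_of_le_of_ne (h1 j) hfj.2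
      set t1 := min (1 - q i) (q j) with ht1
      set t2 := min (q i) (1 - q j) with ht2
      have ht1p : 0 < t1 := lt_min (by linarith) hj0
      have ht2p : 0 < t2 := lt_min hi0 (by linarith)
      have ht1a : t1 ≤ 1 - q i := min_le_left _ _
      have ht1b : t1 ≤ q j := min_le_right _ _
      have ht2a : t2 ≤ q i := min_le_left _ _
      have ht2b : t2 ≤ 1 - q j := min_le_right _ _
      set q1 := Function.update (Function.update q i (q i + t1)) j (q j - t1) with hq1
      set q2 := Function.update (Function.update q i (q i - t2)) j (q j + t2) with hq2
      have e1i : q1 i = q i + t1 := by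
        rw [hq1, Function.update_of_ne hij, Function.update_self]
      have e1j : q1 j = q j - t1 := by rw [hq1, Function.update_self]
      have e1o : ∀ a, a ≠ i → a ≠ j → q1 a = q a := by
        intro a hai haj
        rw [hq1, Function.update_of_ne haj, Function.update_of_ne hai]
      have e2i : q2 i = q i - t2 := by
        rw [hq2, Function.update_of_ne hij, Function.update_self]
      have e2j : q2 j = q j + t2 := by rw [hq2, Function.update_self]
      have e2o : ∀ a, a ≠ i → a ≠ j → q2 a = q a := by
        intro a hai haj
        rw [hq2, Function.update_of_ne haj, Function.update_of_ne hai]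
      -- bounds
      have hb1 : ∀ a, 0 ≤ q1 a ∧ q1 a ≤ 1 := by
        intro a
        rcases em (a = i) with rfl | hai
        · rw [e1i]; constructor <;> linarith
        rcases em (a = j) with rfl | haj
        · rw [e1j]; constructor <;> linarith
        · rw [e1o a hai haj]; exact ⟨h0 a, h1 a⟩
      have hb2 : ∀ a, 0 ≤ q2 a ∧ q2 a ≤ 1 := by
        intro a
        rcases em (a = i) with rfl | hai
        · rw [e2i]; constructor <;> linarith
        rcases em (a = j) with rfl | haj
        · rw [e2j]; constructor <;> linarith
        · rw [e2o a hai haj]; exact ⟨h0 a, h1 a⟩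
      -- sums
      have hsum_split : ∀ f : ι → ℝ, ∑ a, f a
          = f i + f j + ∑ a ∈ (Finset.univ.erase j).erase i, f a := by
        intro f
        rw [← Finset.add_sum_erase Finset.univ f (Finset.mem_univ j),
            ← Finset.add_sum_erase (Finset.univ.erase j) f
              (Finset.mem_erase.2 ⟨hij, Finset.mem_univ i⟩)]
        ring
      have herase_eq1 : ∀ a ∈ (Finset.univ.erase j).erase i, q1 a = q a := by
        intro a ha
        have h1' := Finset.ne_of_mem_erase ha
        have h2' := Finset.ne_of_mem_erase (Finset.mem_of_mem_erase ha)
        exact e1o a h1' h2'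
      have herase_eq2 : ∀ a ∈ (Finset.univ.erase j).erase i, q2 a = q a := by
        intro a ha
        have h1' := Finset.ne_of_mem_erase ha
        have h2' := Finset.ne_of_mem_erase (Finset.mem_of_mem_erase ha)
        exact e2o a h1' h2'
      have hsum1 : ∑ a, q1 a = (k:ℝ) := by
        rw [hsum_split q1, e1i, e1j, Finset.sum_congr rfl herase_eq1]
        rw [hsum_split q] at hsum
        linarith
      have hsum2 : ∑ a, q2 a = (k:ℝ) := by
        rw [hsum_split q2, e2i, e2j, Finset.sum_congr rfl herase_eq2]
        rw [hsum_split q] at hsum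
        linarith
      -- fractional counts decrease
      have hmemfilter : ∀ (a : ι), q a ≠ 0 → q a ≠ 1 →
          a ∈ Finset.univ.filter (fun i => q i ≠ 0 ∧ q i ≠ 1) := by
        intro a ha hb; simp [ha, hb]
      have hcard_of : ∀ (qq : ι → ℝ) (b : ι),
          b ∈ Finset.univ.filter (fun i => q i ≠ 0 ∧ q i ≠ 1) →
          (qq b = 0 ∨ qq b = 1) →
          (∀ a, a ≠ i → a ≠ j → qq a = q a) →
          (Finset.univ.filter (fun a => qq a ≠ 0 ∧ qq a ≠ 1)).card ≤ N := by
        intro qq b hbmem hb ho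
        have hsub : Finset.univ.filter (fun a => qq a ≠ 0 ∧ qq a ≠ 1)
            ⊆ (Finset.univ.filter (fun i => q i ≠ 0 ∧ q i ≠ 1)).erase b := by
          intro a ha
          simp only [Finset.mem_filter, Finset.mem_univ, true_and] at ha
          apply Finset.mem_erase.2
          constructor
          · rintro rfl
            rcases hb with h | h
            · exact ha.1 h
            · exact ha.2 h
          · rcases em (a = i) with rfl | hai
            · exact hmemfilter a hfi.1 hfi.2
            rcases em (a = j) with rfl | haj
            · exact hmemfilter a hfj.1 hfj.2
            · rw [ho a hai haj] at ha
              exact hmemfilter a ha.1 ha.2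
        have hle := Finset.card_le_card hsub
        rw [Finset.card_erase_of_mem hbmem] at hle
        omega
      have hcard1 : (Finset.univ.filter (fun a => q1 a ≠ 0 ∧ q1 a ≠ 1)).card ≤ N := by
        rcases min_choice (1 - q i) (q j) with hch | hch
        · exact hcard_of q1 i (hmemfilter i hfi.1 hfi.2)
            (Or.inr (by rw [e1i, ht1, hch]; ring)) e1o
        · exact hcard_of q1 j (hmemfilter j hfj.1 hfj.2)
            (Or.inl (by rw [e1j, ht1, hch]; ring)) e1o
      have hcard2 : (Finset.univ.filter (fun a => q2 a ≠ 0 ∧ q2 a ≠ 1)).card ≤ N := by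
        rcases min_choice (q i) (1 - q j) with hch | hch
        · exact hcard_of q2 i (hmemfilter i hfi.1 hfi.2)
            (Or.inl (by rw [e2i, ht2, hch]; ring)) e2o
        · exact hcard_of q2 j (hmemfilter j hfj.1 hfj.2)
            (Or.inr (by rw [e2j, ht2, hch]; ring)) e2o
      obtain ⟨w1, hw1nn, hw1supp, hw1tot, hw1marg⟩ :=
        ih q1 (fun a => (hb1 a).1) (fun a => (hb1 a).2) hsum1 hcard1
      obtain ⟨w2, hw2nn, hw2supp, hw2tot, hw2marg⟩ :=
        ih q2 (fun a => (hb2 a).1) (fun a => (hb2 a).2) hsum2 hcard2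
      set θ := t2 / (t1 + t2) with hθ
      have htsum : 0 < t1 + t2 := by linarith
      have hθ0 : 0 ≤ θ := div_nonneg ht2p.le htsum.le
      have hθ1 : θ ≤ 1 := by
        rw [hθ, div_le_one htsum]; linarith
      refine ⟨fun S => θ * w1 S + (1-θ) * w2 S, ?_, ?_, ?_, ?_⟩
      · intro S
        dsimp only
        have h1 := hw1nn S; have h2 := hw2nn S
        have h1θ : 0 ≤ 1 - θ := by linarith
        have := mul_nonneg hθ0 h1
        have := mul_nonneg h1θ h2
        linarith
      · intro S hS
        dsimp only at hS
        rcases em (w1 S = 0) with h' | h'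
        · refine hw2supp S fun h'' => hS ?_
          rw [h', h'']; ring
        · exact hw1supp S h'
      · dsimp only
        rw [Finset.sum_add_distrib, ← Finset.mul_sum, ← Finset.mul_sum, hw1tot, hw2tot]
        ring
      · intro a
        dsimp only
        rw [Finset.sum_add_distrib, ← Finset.mul_sum, ← Finset.mul_sum, hw1marg, hw2marg]
        rcases em (a = i) with rfl | hai
        · rw [e1i, e2i, hθ]; field_simp; ring
        rcases em (a = j) with rfl | haj
        · rw [e1j, e2j, hθ]; field_simp; ring
        · rw [e1o a hai haj, e2o a hai haj]; ring

lemma exists_weights {ι : Type*} [Fintype ι] [DecidableEq ι] (k : ℕ) (q : ι → ℝ)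
    (h0 : ∀ i, 0 ≤ q i) (h1 : ∀ i, q i ≤ 1) (hsum : ∑ i, q i = k) :
    ∃ w : Finset ι → ℝ, (∀ S, 0 ≤ w S) ∧ (∀ S, w S ≠ 0 → S.card = k) ∧
      (∑ S : Finset ι, w S = 1) ∧
      ∀ i, ∑ S ∈ Finset.univ.filter (fun S : Finset ι => i ∈ S), w S = q i :=
  exists_weights_aux k _ q h0 h1 hsum le_rfl

lemma exists_strategy {n k : ℕ} (hk : 1 ≤ k) (hn : k ≤ n) (q : Fin n → ℝ)
    (h0 : ∀ x, 0 ≤ q x) (h1 : ∀ x, q x ≤ 1) (hsum : ∑ x, q x = k) :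
    ∃ Q : (Fin k → Fin n) → ℝ, IsPMF Q ∧ ∀ x, coversG Q x = q x := by
  classical
  obtain ⟨w, hwnn, hwsupp, hwtot, hwmarg⟩ := exists_weights k q h0 h1 hsum
  have hn0 : 0 < n := lt_of_lt_of_le (Nat.lt_of_lt_of_le Nat.zero_lt_one hk) hn
  set tup : Finset (Fin n) → (Fin k → Fin n) := fun S =>
    if h : S.card = k then (fun j => (S.orderIsoOfFin h j : Fin n)) else (fun _ => ⟨0, hn0⟩)
    with htup
  set Q : (Fin k → Fin n) → ℝ := fun a => ∑ S ∈ Finset.univ.filter (fun S => tup S = a), w S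
    with hQ
  have hcov : ∀ S : Finset (Fin n), S.card = k →
      ∀ x : Fin n, (∃ j, tup S j = x) ↔ x ∈ S := by
    intro S hS x
    rw [htup]
    simp only [dif_pos hS]
    constructor
    · rintro ⟨j, rfl⟩
      exact (S.orderIsoOfFin hS j).2
    · intro hx
      exact ⟨(S.orderIsoOfFin hS).symm ⟨x, hx⟩,
        congrArg Subtype.val ((S.orderIsoOfFin hS).apply_symm_apply ⟨x, hx⟩)⟩
  refine ⟨Q, ⟨?_, ?_⟩, ?_⟩
  · intro a
    exact Finset.sum_nonneg fun S _ => hwnn S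
  · rw [hQ]
    rw [Finset.sum_fiberwise Finset.univ tup w]
    exact hwtot
  · intro x
    suffices hfinal : (∑ a : Fin k → Fin n, if ∃ j, a j = x then Q a else 0) = q x by
      rw [coversG]
      convert hfinal using 2 with a
      congr 1
    have step1 : ∀ a : Fin k → Fin n,
        (if ∃ j, a j = x then Q a else 0)
          = ∑ S ∈ Finset.univ.filter (fun S => tup S = a),
              (if ∃ j, tup S j = x then w S else 0) := by
      intro a
      rw [hQ]
      dsimp only
      rcases em (∃ j, a j = x) with h | h
      · rw [if_pos h]
        apply Finset.sum_congr rfl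
        intro S hS
        rw [Finset.mem_filter] at hS
        rw [if_pos (hS.2 ▸ h)]
      · rw [if_neg h]
        symm
        apply Finset.sum_eq_zero
        intro S hS
        rw [Finset.mem_filter] at hS
        rw [if_neg (hS.2 ▸ h)]
    have e : (∑ a : Fin k → Fin n, if ∃ j, a j = x then Q a else 0)
        = ∑ a : Fin k → Fin n, ∑ S ∈ Finset.univ.filter (fun S => tup S = a),
            (if ∃ j, tup S j = x then w S else 0) :=
      Finset.sum_congr rfl (fun a _ => step1 a)
    refine e.trans ?_
    rw [Finset.sum_fiberwise Finset.univ tup (fun S => if ∃ j, tup S j = x then w S else 0)]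
    rw [← hwmarg x, Finset.sum_filter]
    apply Finset.sum_congr rfl
    intro S _
    rcases em (w S = 0) with hw | hw
    · rw [hw]; simp
    · have hc := hwsupp S hw
      rcases em (x ∈ S) with hx | hx
      · rw [if_pos ((hcov S hc x).2 hx), if_pos hx]
      · rw [if_neg (fun h => hx ((hcov S hc x).1 h)), if_neg hx]

lemma sum_Icc_split {M : Type*} [AddCommMonoid M] (f : ℕ → M) (s n : ℕ) (h1 : 1 ≤ s)
    (h2 : s ≤ n + 1) :
    ∑ i ∈ Finset.Icc 1 n, f i = (∑ i ∈ Finset.Icc 1 (s-1), f i) + ∑ i ∈ Finset.Icc s n, f i := by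
  have e1 : Finset.Icc 1 n = Finset.Icc 1 (s-1) ∪ Finset.Icc s n := by
    ext x; simp only [Finset.mem_Icc, Finset.mem_union]; omega
  rw [e1, Finset.sum_union]
  rw [Finset.disjoint_left]
  intro a ha hb
  simp only [Finset.mem_Icc] at ha hb
  omega

lemma sum_fin_shift {M : Type*} [AddCommMonoid M] (n : ℕ) (f : ℕ → M) :
    ∑ x : Fin n, f (x.1 + 1) = ∑ i ∈ Finset.Icc 1 n, f i := by
  refine Finset.sum_bij' (fun (x : Fin n) _ => x.1 + 1)
    (fun i hi => (⟨i - 1, by simp only [Finset.mem_Icc] at hi; omega⟩ : Fin n)) ?_ ?_ ?_ ?_ ?_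
  · intro a _; simp only [Finset.mem_Icc]; omega
  · intro b _; exact Finset.mem_univ _
  · intro a _; apply Fin.ext; simp
  · intro b hb; simp only [Finset.mem_Icc] at hb; simp; omega
  · intro a _; rfl

end AuxLemmas

section
open Real
set_option maxHeartbeats 1000000

/-- The minimal expected `α`-loss under `k` guesses, for a pmf
`p_1 ≥ … ≥ p_n > 0` and `1 ≤ k < n`, equals
`(α/(α−1)) ∑_{i=s*}^n p_i (1 − ((k−s*+1) p_i^α / ∑_{j=s*}^n p_j^α)^{(α−1)/α})`. -/
theorem stmt12 (n k : ℕ) (hk : 1 ≤ k) (hkn : k < n)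
    (α : ℝ) (hα0 : 0 < α) (hα1 : α ≠ 1)
    (p : ℕ → ℝ) (hpos : ∀ i ∈ Finset.Icc 1 n, 0 < p i)
    (hmono : ∀ i j, 1 ≤ i → i ≤ j → j ≤ n → p j ≤ p i)
    (hsum : ∑ i ∈ Finset.Icc 1 n, p i = 1) :
    IsLeast
      {v : EReal | ∃ Q : (Fin k → Fin n) → ℝ, IsPMF Q ∧
        v = ∑ x : Fin n, ((p (x.1 + 1) : ℝ) : EReal) * alphaLossE α (coversG Q x)}
      ((MEalpha α p k n : ℝ) : EReal) := by
  classical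
  have hαne : α ≠ 0 := ne_of_gt hα0
  have hα1' : α - 1 ≠ 0 := fun h => hα1 (by linarith [sub_eq_zero.mp h])
  set s := sstar α p k n with hsdef
  -- s belongs to the defining set
  have hwitness : k ∈ {r : ℕ | 1 ≤ r ∧ r ≤ k ∧
      ((k : ℝ) - r + 1) * p r ^ α ≤ ∑ i ∈ Finset.Icc r n, p i ^ α} := by
    refine ⟨hk, le_refl k, ?_⟩
    have h1 : ((k:ℝ) - k + 1) = 1 := by ring
    rw [h1, one_mul]
    apply Finset.single_le_sum (f := fun i => p i ^ α)
    · intro i hi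
      simp only [Finset.mem_Icc] at hi
      exact (Real.rpow_nonneg (hpos i (Finset.mem_Icc.2 ⟨le_trans hk hi.1, hi.2⟩)).le α)
    · exact Finset.mem_Icc.2 ⟨le_refl k, hkn.le⟩
  have hmem : 1 ≤ s ∧ s ≤ k ∧
      ((k : ℝ) - s + 1) * p s ^ α ≤ ∑ i ∈ Finset.Icc s n, p i ^ α := by
    rw [hsdef, sstar]
    exact Nat.sInf_mem ⟨k, hwitness⟩
  obtain ⟨hs1, hsk, hsle⟩ := hmem
  have hsn : s ≤ n := le_trans hsk hkn.le
  set S := ∑ j ∈ Finset.Icc s n, p j ^ α with hS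
  set m : ℝ := (k : ℝ) - (s : ℕ) + 1 with hm
  have hppos : ∀ i ∈ Finset.Icc s n, 0 < p i := by
    intro i hi
    simp only [Finset.mem_Icc] at hi
    exact hpos i (Finset.mem_Icc.2 ⟨le_trans hs1 hi.1, hi.2⟩)
  have hSpos : 0 < S := by
    rw [hS]
    apply Finset.sum_pos
    · intro i hi; exact Real.rpow_pos_of_pos (hppos i hi) α
    · exact ⟨s, Finset.mem_Icc.2 ⟨le_refl s, hsn⟩⟩
  have hm1 : (1:ℝ) ≤ m := by
    have : (s:ℝ) ≤ k := Nat.cast_le.2 hsk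
    rw [hm]; linarith
  have hmpos : (0:ℝ) < m := by linarith
  set qs : ℕ → ℝ := fun i => if i < s then 1 else m * p i ^ α / S with hqs
  have hqs_pos : ∀ i ∈ Finset.Icc 1 n, 0 < qs i := by
    intro i hi
    simp only [Finset.mem_Icc] at hi
    rw [hqs]; dsimp only
    split
    · norm_num
    · next h =>
      push_neg at h
      exact div_pos (mul_pos hmpos (Real.rpow_pos_of_pos
        (hppos i (Finset.mem_Icc.2 ⟨h, hi.2⟩)) α)) hSpos
  have hqs_le : ∀ i ∈ Finset.Icc 1 n, qs i ≤ 1 := by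
    intro i hi
    simp only [Finset.mem_Icc] at hi
    rw [hqs]; dsimp only
    split
    · exact le_refl 1
    · next h =>
      push_neg at h
      rw [div_le_one hSpos]
      calc m * p i ^ α ≤ m * p s ^ α := by
            apply mul_le_mul_of_nonneg_left _ hmpos.le
            exact Real.rpow_le_rpow (hppos i (Finset.mem_Icc.2 ⟨h, hi.2⟩)).le
              (hmono s i hs1 h hi.2) hα0.le
        _ ≤ S := hsle
  have hqs_sum : ∑ i ∈ Finset.Icc 1 n, qs i = (k:ℝ) := by
    rw [sum_Icc_split qs s n hs1 (by omega)]
    have h1 : ∑ i ∈ Finset.Icc 1 (s-1), qs i = ((s:ℝ) - 1) := by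
      rw [Finset.sum_congr rfl (g := fun _ => (1:ℝ)) ?_]
      · rw [Finset.sum_const, Nat.card_Icc]
        have : s - 1 + 1 - 1 = s - 1 := by omega
        rw [this, nsmul_eq_mul, mul_one]
        have : ((s - 1 : ℕ) : ℝ) = (s:ℝ) - 1 := by
          push_cast [Nat.cast_sub hs1]; ring
        rw [this]
      · intro i hi
        simp only [Finset.mem_Icc] at hi
        rw [hqs]; dsimp only
        rw [if_pos (by omega)]
    have h2 : ∑ i ∈ Finset.Icc s n, qs i = m := by
      have he : ∀ i ∈ Finset.Icc s n, qs i = m * p i ^ α / S := by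
        intro i hi
        simp only [Finset.mem_Icc] at hi
        rw [hqs]; dsimp only
        rw [if_neg (by omega)]
      rw [Finset.sum_congr rfl he]
      rw [← Finset.sum_div, ← Finset.mul_sum, ← hS, mul_div_assoc,
        div_self (ne_of_gt hSpos), mul_one]
    rw [h1, h2, hm]
    ring
  -- lambda
  set lam : ℝ := (m / S) ^ ((α-1)/α - 1) with hlam
  have hlampos : 0 < lam := Real.rpow_pos_of_pos (div_pos hmpos hSpos) _
  have hexp : α * ((α-1)/α - 1) = -1 := by field_simp; ring
  have hlam_eq : ∀ i ∈ Finset.Icc s n, p i * qs i ^ ((α-1)/α - 1) = lam := by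
    intro i hi
    simp only [Finset.mem_Icc] at hi
    have hpipos := hppos i (Finset.mem_Icc.2 hi)
    have hq_eq : qs i = (m / S) * p i ^ α := by
      rw [hqs]; dsimp only
      rw [if_neg (by omega)]
      ring
    rw [hq_eq, Real.mul_rpow (div_pos hmpos hSpos).le (Real.rpow_nonneg hpipos.le α),
      ← Real.rpow_mul hpipos.le, hexp, Real.rpow_neg_one, hlam]
    field_simp
  have hlam_le : ∀ i, 1 ≤ i → i < s → lam ≤ p i := by
    intro i h1i his
    have hs2 : 2 ≤ s := by omega
    have hnotmem : (s-1) ∉ {r : ℕ | 1 ≤ r ∧ r ≤ k ∧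
        ((k : ℝ) - r + 1) * p r ^ α ≤ ∑ i ∈ Finset.Icc r n, p i ^ α} := by
      intro hmem'
      have hle := Nat.sInf_le hmem'
      rw [← sstar, ← hsdef] at hle
      omega
    have hfail : ¬ (((k : ℝ) - ((s-1:ℕ):ℝ) + 1) * p (s-1) ^ α
        ≤ ∑ i ∈ Finset.Icc (s-1) n, p i ^ α) := by
      intro hc
      exact hnotmem ⟨by omega, by omega, hc⟩
    push_neg at hfail
    have hsplit : ∑ i ∈ Finset.Icc (s-1) n, p i ^ α = p (s-1) ^ α + S := by
      have e : Finset.Icc (s-1) n = insert (s-1) (Finset.Icc s n) := by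
        ext x; simp only [Finset.mem_Icc, Finset.mem_insert]; omega
      rw [e, Finset.sum_insert (by simp only [Finset.mem_Icc]; omega), hS]
    have hcast : ((s-1:ℕ):ℝ) = (s:ℝ) - 1 := by
      rw [Nat.cast_sub hs1]; norm_num
    rw [hsplit, hcast] at hfail
    have hmid : (k:ℝ) - ((s:ℝ)-1) + 1 = m + 1 := by rw [hm]; ring
    rw [hmid] at hfail
    have hkey : S < m * p (s-1) ^ α := by nlinarith [hfail]
    have hs1n : s - 1 ≤ n := by omega
    have hps1 : 0 < p (s-1) := hpos (s-1) (Finset.mem_Icc.2 ⟨by omega, hs1n⟩)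
    have hmono' : p (s-1) ≤ p i := hmono i (s-1) h1i (by omega) hs1n
    have hkey2 : S < m * p i ^ α :=
      lt_of_lt_of_le hkey (mul_le_mul_of_nonneg_left
        (Real.rpow_le_rpow hps1.le hmono' hα0.le) hmpos.le)
    have hexp2 : (α-1)/α - 1 = -(1/α) := by field_simp; ring
    have hpi : 0 < p i := hpos i (Finset.mem_Icc.2 ⟨h1i, by omega⟩)
    have e1 : lam = (S/m) ^ (1/α) := by
      rw [hlam, hexp2, Real.rpow_neg (div_nonneg hmpos.le hSpos.le),
        ← Real.inv_rpow (div_nonneg hmpos.le hSpos.le), inv_div]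
    have e2 : (S/m) ^ (1/α) ≤ (p i ^ α) ^ (1/α) := by
      apply Real.rpow_le_rpow (div_nonneg hSpos.le hmpos.le) _ (by positivity)
      rw [div_le_iff₀ hmpos]
      nlinarith [hkey2]
    have e3 : (p i ^ α) ^ (1/α) = p i := by
      rw [← Real.rpow_mul hpi.le, show α * (1/α) = 1 by field_simp, Real.rpow_one]
    rw [e1]
    calc (S/m) ^ (1/α) ≤ (p i ^ α) ^ (1/α) := e2
      _ = p i := e3
  -- MEalpha in terms of qs
  have hME : MEalpha α p k n
      = ∑ i ∈ Finset.Icc 1 n, p i * ((α/(α-1)) * (1 - qs i ^ ((α-1)/α))) := by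
    have hME0 : MEalpha α p k n
        = (α/(α-1)) * ∑ i ∈ Finset.Icc s n, p i * (1 - (m * p i ^ α / S) ^ ((α-1)/α)) := rfl
    rw [hME0, sum_Icc_split (fun i => p i * ((α/(α-1)) * (1 - qs i ^ ((α-1)/α)))) s n hs1
      (by omega)]
    have hz : ∑ i ∈ Finset.Icc 1 (s-1), p i * ((α/(α-1)) * (1 - qs i ^ ((α-1)/α))) = 0 := by
      apply Finset.sum_eq_zero
      intro i hi
      simp only [Finset.mem_Icc] at hi
      have hq1' : qs i = 1 := by rw [hqs]; dsimp only; rw [if_pos (by omega)]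
      rw [hq1', Real.one_rpow]; ring
    rw [hz, zero_add, Finset.mul_sum]
    apply Finset.sum_congr rfl
    intro i hi
    simp only [Finset.mem_Icc] at hi
    have hq2' : qs i = m * p i ^ α / S := by rw [hqs]; dsimp only; rw [if_neg (by omega)]
    rw [hq2']; ring
  -- core real inequality
  have hcore : ∀ qq : ℕ → ℝ,
      (∀ i ∈ Finset.Icc 1 n, 0 ≤ qq i) → (∀ i ∈ Finset.Icc 1 n, qq i ≤ 1) →
      (∑ i ∈ Finset.Icc 1 n, qq i ≤ (k:ℝ)) →
      (∀ i ∈ Finset.Icc 1 n, 0 < qq i ∨ 1 < α) →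
      ∑ i ∈ Finset.Icc 1 n, p i * ((α/(α-1)) * (1 - qs i ^ ((α-1)/α)))
        ≤ ∑ i ∈ Finset.Icc 1 n, p i * ((α/(α-1)) * (1 - qq i ^ ((α-1)/α))) := by
    intro qq hqq0 hqq1 hqqs hqq'
    have htang : ∀ i ∈ Finset.Icc 1 n,
        p i * ((α/(α-1)) * (1 - qs i ^ ((α-1)/α)))
          - (p i * qs i ^ ((α-1)/α - 1)) * (qq i - qs i)
        ≤ p i * ((α/(α-1)) * (1 - qq i ^ ((α-1)/α))) := by
      intro i hi
      have h := tangent hα0 hα1 (hqs_pos i hi) (hqq0 i hi) (hqq' i hi)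
      have hpi : (0:ℝ) ≤ p i := (hpos i hi).le
      nlinarith [mul_le_mul_of_nonneg_left h hpi]
    have hsum_t := Finset.sum_le_sum htang
    have hkey : ∑ i ∈ Finset.Icc 1 n, (p i * qs i ^ ((α-1)/α - 1)) * (qq i - qs i) ≤ 0 := by
      have hsplit : ∑ i ∈ Finset.Icc 1 n, (p i * qs i ^ ((α-1)/α - 1)) * (qq i - qs i)
          = (∑ i ∈ Finset.Icc 1 n, (p i * qs i ^ ((α-1)/α - 1) - lam) * (qq i - qs i))
            + lam * ((∑ i ∈ Finset.Icc 1 n, qq i) - ∑ i ∈ Finset.Icc 1 n, qs i) := by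
        rw [← Finset.sum_sub_distrib, Finset.mul_sum, ← Finset.sum_add_distrib]
        apply Finset.sum_congr rfl
        intro i _; ring
      rw [hsplit, hqs_sum]
      have h1 : ∑ i ∈ Finset.Icc 1 n,
          (p i * qs i ^ ((α-1)/α - 1) - lam) * (qq i - qs i) ≤ 0 := by
        apply Finset.sum_nonpos
        intro i hi
        have hi' := Finset.mem_Icc.1 hi
        rcases lt_or_ge i s with his | his
        · have hqsi : qs i = 1 := by rw [hqs]; dsimp only; rw [if_pos his]
          apply mul_nonpos_iff.2
          left
          constructor
          · rw [hqsi, Real.one_rpow, mul_one]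
            have := hlam_le i hi'.1 his
            linarith
          · rw [hqsi]
            have := hqq1 i hi
            linarith
        · rw [hlam_eq i (Finset.mem_Icc.2 ⟨his, hi'.2⟩), sub_self, zero_mul]
      have h2 : lam * ((∑ i ∈ Finset.Icc 1 n, qq i) - (k:ℝ)) ≤ 0 :=
        mul_nonpos_iff.2 (Or.inl ⟨hlampos.le, by linarith⟩)
      linarith
    have hdist : ∑ i ∈ Finset.Icc 1 n,
        (p i * ((α/(α-1)) * (1 - qs i ^ ((α-1)/α)))
          - (p i * qs i ^ ((α-1)/α - 1)) * (qq i - qs i))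
        = (∑ i ∈ Finset.Icc 1 n, p i * ((α/(α-1)) * (1 - qs i ^ ((α-1)/α))))
          - ∑ i ∈ Finset.Icc 1 n, (p i * qs i ^ ((α-1)/α - 1)) * (qq i - qs i) :=
      Finset.sum_sub_distrib _ _
    rw [hdist] at hsum_t
    linarith
  constructor
  · -- membership: the optimal strategy
    have hb0 : ∀ x : Fin n, 0 ≤ qs (x.1+1) := by
      intro x
      have hx2 : x.1 < n := x.2
      exact (hqs_pos _ (Finset.mem_Icc.2 ⟨by omega, by omega⟩)).le
    have hb1 : ∀ x : Fin n, qs (x.1+1) ≤ 1 := by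
      intro x
      have hx2 : x.1 < n := x.2
      exact hqs_le _ (Finset.mem_Icc.2 ⟨by omega, by omega⟩)
    have hbs : ∑ x : Fin n, qs (x.1+1) = (k:ℝ) := by
      rw [sum_fin_shift n qs, hqs_sum]
    obtain ⟨Q, hQpmf, hQcov⟩ := exists_strategy hk hkn.le (fun x => qs (x.1+1)) hb0 hb1 hbs
    refine ⟨Q, hQpmf, ?_⟩
    have hterm : ∀ x : Fin n, ((p (x.1+1) : ℝ) : EReal) * alphaLossE α (coversG Q x)
        = (((p (x.1+1) * ((α/(α-1)) * (1 - qs (x.1+1) ^ ((α-1)/α)))) : ℝ) : EReal) := by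
      intro x
      have hx2 : x.1 < n := x.2
      have hqvpos : 0 < qs (x.1+1) := hqs_pos _ (Finset.mem_Icc.2 ⟨by omega, by omega⟩)
      rw [hQcov x]
      rw [alphaLossE, if_neg (fun hcc => absurd hcc.1 (ne_of_gt hqvpos))]
      rw [← EReal.coe_mul]
    calc ((MEalpha α p k n : ℝ) : EReal)
        = ((∑ i ∈ Finset.Icc 1 n, p i * ((α/(α-1)) * (1 - qs i ^ ((α-1)/α))) : ℝ) : EReal) := by
          rw [hME]
      _ = ((∑ x : Fin n,
            (fun i => p i * ((α/(α-1)) * (1 - qs i ^ ((α-1)/α)))) (x.1+1) : ℝ) : EReal) := by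
          rw [sum_fin_shift n (fun i => p i * ((α/(α-1)) * (1 - qs i ^ ((α-1)/α))))]
      _ = ∑ x : Fin n,
            (((p (x.1+1) * ((α/(α-1)) * (1 - qs (x.1+1) ^ ((α-1)/α)))) : ℝ) : EReal) := by
          rw [coe_sum']
      _ = ∑ x : Fin n, ((p (x.1 + 1) : ℝ) : EReal) * alphaLossE α (coversG Q x) :=
          Finset.sum_congr rfl (fun x _ => (hterm x).symm)
  · -- lower bound
    rintro v ⟨Q, ⟨hQ0, hQ1⟩, rfl⟩
    have hcov_eq : ∀ x : Fin n,
        coversG Q x = ∑ a : Fin k → Fin n, (if ∃ j, a j = x then Q a else 0) := by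
      intro x
      unfold coversG
      apply Finset.sum_congr rfl
      intro a _
      congr 1
    have hq0 : ∀ x : Fin n, 0 ≤ coversG Q x := by
      intro x
      unfold coversG
      apply Finset.sum_nonneg
      intro a _
      split
      · exact hQ0 a
      · exact le_refl 0
    have hq1 : ∀ x : Fin n, coversG Q x ≤ 1 := by
      intro x
      rw [hcov_eq x]
      calc ∑ a : Fin k → Fin n, (if ∃ j, a j = x then Q a else 0)
          ≤ ∑ a : Fin k → Fin n, Q a := by
            apply Finset.sum_le_sum
            intro a _
            split
            · exact le_refl _
            · exact hQ0 a
        _ = 1 := hQ1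
    have hqsum' : ∑ x : Fin n, coversG Q x ≤ (k:ℝ) := by
      calc ∑ x : Fin n, coversG Q x
          = ∑ x : Fin n, ∑ a : Fin k → Fin n, (if ∃ j, a j = x then Q a else 0) :=
            Finset.sum_congr rfl (fun x _ => hcov_eq x)
        _ = ∑ a : Fin k → Fin n, ∑ x : Fin n, (if ∃ j, a j = x then Q a else 0) :=
            Finset.sum_comm
        _ ≤ ∑ a : Fin k → Fin n, (k:ℝ) * Q a := by
            apply Finset.sum_le_sum
            intro a _
            have he : ∑ x : Fin n, (if ∃ j, a j = x then Q a else 0)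
                = ((Finset.univ.filter (fun x : Fin n => ∃ j, a j = x)).card : ℝ) * Q a := by
              rw [← Finset.sum_filter, Finset.sum_const, nsmul_eq_mul]
            rw [he]
            apply mul_le_mul_of_nonneg_right _ (hQ0 a)
            have hsub : (Finset.univ.filter (fun x : Fin n => ∃ j, a j = x))
                ⊆ Finset.univ.image a := by
              intro x hx
              simp only [Finset.mem_filter, Finset.mem_univ, true_and] at hx
              obtain ⟨j, hj⟩ := hx
              exact Finset.mem_image.2 ⟨j, Finset.mem_univ j, hj⟩
            calc ((Finset.univ.filter (fun x : Fin n => ∃ j, a j = x)).card : ℝ)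
                ≤ ((Finset.univ.image a).card : ℝ) := by
                  exact_mod_cast Finset.card_le_card hsub
              _ ≤ (k:ℝ) := by
                  have := Finset.card_image_le (s := Finset.univ) (f := a)
                  simp only [Finset.card_univ, Fintype.card_fin] at this
                  exact_mod_cast this
        _ = (k:ℝ) * ∑ a : Fin k → Fin n, Q a := by rw [Finset.mul_sum]
        _ = (k:ℝ) := by rw [hQ1, mul_one]
    have hloss_nonneg : ∀ x : Fin n,
        (0:EReal) ≤ ((p (x.1+1):ℝ):EReal) * alphaLossE α (coversG Q x) := by
      intro x
      have hx2 : x.1 < n := x.2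
      have hppos' : 0 < p (x.1+1) := hpos _ (Finset.mem_Icc.2 ⟨by omega, by omega⟩)
      rw [alphaLossE]
      split
      · rw [EReal.coe_mul_top_of_pos hppos']
        exact le_top
      · next hcond =>
        rw [← EReal.coe_mul]
        have : (0:ℝ) ≤ p (x.1+1) * ((α/(α-1)) * (1 - coversG Q x ^ ((α-1)/α))) := by
          apply mul_nonneg hppos'.le
          rcases lt_or_gt_of_ne hα1 with h | h
          · have hqpos : 0 < coversG Q x := by
              rcases eq_or_lt_of_le (hq0 x) with he | hlt
              · exact absurd ⟨he.symm, h⟩ hcond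
              · exact hlt
            have hβ : (α-1)/α ≤ 0 := le_of_lt (div_neg_of_neg_of_pos (by linarith) hα0)
            have h1 : 1 ≤ coversG Q x ^ ((α-1)/α) :=
              Real.one_le_rpow_of_pos_of_le_one_of_nonpos hqpos (hq1 x) hβ
            have hc : α/(α-1) ≤ 0 := le_of_lt (div_neg_of_pos_of_neg hα0 (by linarith))
            nlinarith
          · have hβ : 0 ≤ (α-1)/α := le_of_lt (div_pos (by linarith) hα0)
            have h1 : coversG Q x ^ ((α-1)/α) ≤ 1 := Real.rpow_le_one (hq0 x) (hq1 x) hβ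
            have hc : 0 ≤ α/(α-1) := le_of_lt (div_pos hα0 (by linarith))
            nlinarith
        exact_mod_cast this
    by_cases hbad : ∃ x : Fin n, coversG Q x = 0 ∧ α < 1
    · obtain ⟨x0, hx0, hαlt⟩ := hbad
      have hx2 : x0.1 < n := x0.2
      have htop : ((p (x0.1+1):ℝ):EReal) * alphaLossE α (coversG Q x0) = ⊤ := by
        rw [alphaLossE, if_pos ⟨hx0, hαlt⟩,
          EReal.coe_mul_top_of_pos (hpos _ (Finset.mem_Icc.2 ⟨by omega, by omega⟩))]
      have hle := Finset.single_le_sum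
        (f := fun x : Fin n => ((p (x.1+1):ℝ):EReal) * alphaLossE α (coversG Q x))
        (fun x _ => hloss_nonneg x) (Finset.mem_univ x0)
      rw [htop] at hle
      rw [top_le_iff.1 hle]
      exact le_top
    · push_neg at hbad
      have hqpos' : ∀ x : Fin n, 0 < coversG Q x ∨ 1 < α := by
        intro x
        rcases lt_or_gt_of_ne hα1 with h | h
        · left
          rcases eq_or_lt_of_le (hq0 x) with he | hlt
          · exact absurd h (not_lt.2 (hbad x he.symm))
          · exact hlt
        · right; exact h
      have hterm : ∀ x : Fin n, ((p (x.1+1):ℝ):EReal) * alphaLossE α (coversG Q x)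
          = (((p (x.1+1) * ((α/(α-1)) * (1 - (coversG Q x) ^ ((α-1)/α)))):ℝ):EReal) := by
        intro x
        rw [alphaLossE, if_neg (fun hcc => absurd hcc.2 (not_lt.2 (hbad x hcc.1))), ← EReal.coe_mul]
      set qq : ℕ → ℝ := fun i =>
        if h : 1 ≤ i ∧ i ≤ n then coversG Q ⟨i-1, by omega⟩ else qs i with hqq
      have hqq_eval : ∀ x : Fin n, qq (x.1+1) = coversG Q x := by
        intro x
        have hx2 : x.1 < n := x.2
        rw [hqq]; dsimp only
        rw [dif_pos ⟨by omega, by omega⟩]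
        rw [show (⟨x.1+1-1, by omega⟩ : Fin n) = x from Fin.ext (by simp)]
      have hqq0 : ∀ i ∈ Finset.Icc 1 n, 0 ≤ qq i := by
        intro i hi
        have hi' := Finset.mem_Icc.1 hi
        rw [hqq]; dsimp only
        rw [dif_pos ⟨hi'.1, hi'.2⟩]
        exact hq0 _
      have hqq1 : ∀ i ∈ Finset.Icc 1 n, qq i ≤ 1 := by
        intro i hi
        have hi' := Finset.mem_Icc.1 hi
        rw [hqq]; dsimp only
        rw [dif_pos ⟨hi'.1, hi'.2⟩]
        exact hq1 _
      have hqqpos : ∀ i ∈ Finset.Icc 1 n, 0 < qq i ∨ 1 < α := by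
        intro i hi
        have hi' := Finset.mem_Icc.1 hi
        rw [hqq]; dsimp only
        rw [dif_pos ⟨hi'.1, hi'.2⟩]
        exact hqpos' _
      have hqqsum : ∑ i ∈ Finset.Icc 1 n, qq i ≤ (k:ℝ) := by
        rw [← sum_fin_shift n qq]
        calc ∑ x : Fin n, qq (x.1+1) = ∑ x : Fin n, coversG Q x :=
              Finset.sum_congr rfl (fun x _ => hqq_eval x)
          _ ≤ (k:ℝ) := hqsum'
      have hreal := hcore qq hqq0 hqq1 hqqsum hqqpos
      calc ((MEalpha α p k n : ℝ) : EReal)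
          = ((∑ i ∈ Finset.Icc 1 n, p i * ((α/(α-1)) * (1 - qs i ^ ((α-1)/α))) : ℝ) : EReal) := by
            rw [hME]
        _ ≤ ((∑ i ∈ Finset.Icc 1 n, p i * ((α/(α-1)) * (1 - qq i ^ ((α-1)/α))) : ℝ) : EReal) := by
            exact_mod_cast hreal
        _ = ((∑ x : Fin n,
              (fun i => p i * ((α/(α-1)) * (1 - qq i ^ ((α-1)/α)))) (x.1+1) : ℝ) : EReal) := by
            rw [sum_fin_shift n (fun i => p i * ((α/(α-1)) * (1 - qq i ^ ((α-1)/α))))]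
        _ = ∑ x : Fin n,
              (((p (x.1+1) * ((α/(α-1)) * (1 - qq (x.1+1) ^ ((α-1)/α)))) : ℝ) : EReal) := by
            rw [coe_sum']
        _ = ∑ x : Fin n, ((p (x.1 + 1) : ℝ) : EReal) * alphaLossE α (coversG Q x) := by
            apply Finset.sum_congr rfl
            intro x _
            rw [hqq_eval x, ← hterm x]

end
end

section
/- Let P_X be a pmf supported on 𝒳={x_1,…,x_n} with p_1 ≥ p_2 ≥ … ≥ p_n > 0 where p_i=P_X(x_i), and let k be an integer with 1 ≤ k < n. Then the minimal expected log-loss under k guesses equals ME_1^{(k)}(P_X) = H(X) − H(p_1,…,p_{s*−1}, Σ_{i=s*}^{n} p_i) − (Σ_{i=s*}^{n} p_i)·log(k−s*+1), where s* = min{ r∈{1,…,k} : (k−r+1)·p_r ≤ Σ_{i=r}^{n} p_i }, H(X)=Σ_{i=1}^n p_i log(1/p_i) is the Shannon entropy of P_X, and H(q_1,…,q_m)=Σ_{j=1}^m q_j log(1/q_j). -/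
open Finset

section helpers

noncomputable def erealCoeHom : ℝ →+ EReal := ⟨⟨(fun x => (x : EReal)), EReal.coe_zero⟩, EReal.coe_add⟩

lemma ereal_coe_sum {α : Type*} (s : Finset α) (f : α → ℝ) :
    ((∑ i ∈ s, f i : ℝ) : EReal) = ∑ i ∈ s, ((f i : ℝ) : EReal) :=
  map_sum erealCoeHom f s

lemma sum_fin_eq_sum_Icc (n : ℕ) (f : ℕ → ℝ) :
    ∑ x : Fin n, f (x.1 + 1) = ∑ i ∈ Finset.Icc 1 n, f i := by
  rw [Fin.sum_univ_eq_sum_range (fun i => f (i + 1)) n,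
    show Finset.Icc 1 n = Finset.Ico 1 (n + 1) by rw [Finset.Ico_add_one_right_eq_Icc],
    Finset.sum_Ico_eq_sum_range]
  simp [add_comm]

lemma sum_split {s n : ℕ} (hs : 1 ≤ s) (hsn : s - 1 ≤ n) (f : ℕ → ℝ) :
    ∑ i ∈ Finset.Icc 1 (s - 1), f i + ∑ i ∈ Finset.Icc s n, f i = ∑ i ∈ Finset.Icc 1 n, f i := by
  have h1 : Finset.Icc 1 (s - 1) = Finset.Ioc 0 (s - 1) := Finset.Icc_add_one_left_eq_Ioc 0 (s - 1)
  have h2 : Finset.Icc s n = Finset.Ioc (s - 1) n := by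
    rw [← Finset.Icc_add_one_left_eq_Ioc]; congr 1; omega
  have h3 : Finset.Icc 1 n = Finset.Ioc 0 n := Finset.Icc_add_one_left_eq_Ioc 0 n
  rw [h1, h2, h3]
  exact Finset.sum_Ioc_consecutive f (Nat.zero_le _) hsn


lemma exists_rounding {ι : Type*} [DecidableEq ι] (S : Finset ι) (m : ℕ) :
    ∀ (N : ℕ) (q : ι → ℝ), ((S.filter (fun i => q i ≠ 0 ∧ q i ≠ 1)).card ≤ N) →
    (∀ i ∈ S, 0 ≤ q i) → (∀ i ∈ S, q i ≤ 1) → (∑ i ∈ S, q i = m) →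
    ∃ μ : Finset ι → ℝ, (∀ A, 0 ≤ μ A) ∧
      (∑ A ∈ S.powersetCard m, μ A = 1) ∧
      (∀ i ∈ S, ∑ A ∈ S.powersetCard m, (if i ∈ A then μ A else 0) = q i) := by
  intro N
  induction N with
  | zero =>
    intro q hcard h0 h1 hsum
    have hF : ∀ i ∈ S, q i = 0 ∨ q i = 1 := by
      intro i hi
      by_contra h
      push_neg at h
      have hmem : i ∈ S.filter (fun i => q i ≠ 0 ∧ q i ≠ 1) := by
        simp [mem_filter, hi, h.1, h.2]
      have := card_pos.mpr ⟨i, hmem⟩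
      omega
    set A0 := S.filter (fun i => q i = 1) with hA0
    have hA0card : A0.card = m := by
      have h1' : ∑ i ∈ A0, q i = A0.card := by
        rw [Finset.sum_congr rfl (fun i hi => (mem_filter.mp hi).2)]
        simp [hA0]
      have h2' : ∑ i ∈ S.filter (fun i => ¬ q i = 1), q i = 0 := by
        apply Finset.sum_eq_zero
        intro i hi
        rcases hF i (mem_filter.mp hi).1 with h | h
        · exact h
        · exact absurd h (mem_filter.mp hi).2
      have key : (A0.card : ℝ) = m := by
        rw [← hsum, ← Finset.sum_filter_add_sum_filter_not S (fun i => q i = 1) q, h1', h2',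
          add_zero]
      exact_mod_cast key
    have hA0mem : A0 ∈ S.powersetCard m := by
      rw [mem_powersetCard]
      exact ⟨filter_subset _ _, hA0card⟩
    refine ⟨fun A => if A = A0 then 1 else 0, ?_, ?_, ?_⟩
    · intro A; dsimp only; split <;> norm_num
    · rw [Finset.sum_ite_eq' _ A0 (fun _ => (1:ℝ))]
      simp [hA0mem]
    · intro i hi
      have hcongr : ∀ A ∈ S.powersetCard m,
          (if i ∈ A then (if A = A0 then (1:ℝ) else 0) else 0)
          = (if A = A0 then (if i ∈ A then (1:ℝ) else 0) else 0) := by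
        intro A _
        by_cases h1 : i ∈ A <;> by_cases h2 : A = A0 <;> simp [h1, h2]
      rw [Finset.sum_congr rfl hcongr, Finset.sum_ite_eq' _ A0]
      simp only [hA0mem, if_true]
      rcases hF i hi with h | h
      · have hni : i ∉ A0 := by simp [hA0, mem_filter, h]
        simp [hni, h]
      · have hyi : i ∈ A0 := by simp [hA0, mem_filter, hi, h]
        simp [hyi, h]
  | succ N ih =>
    intro q hcard h0 h1 hsum
    by_cases hle : (S.filter (fun i => q i ≠ 0 ∧ q i ≠ 1)).card ≤ N
    · exact ih q hle h0 h1 hsum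
    set F := S.filter (fun i => q i ≠ 0 ∧ q i ≠ 1) with hFdef
    have hFcard : F.card = N + 1 := by omega
    have hF2 : 1 < F.card := by
      by_contra h
      have hFcard1 : F.card = 1 := by omega
      obtain ⟨i0, hi0⟩ := card_eq_one.mp hFcard1
      have hi0F : i0 ∈ F := hi0 ▸ mem_singleton_self i0
      have hi0S : i0 ∈ S := (mem_filter.mp hi0F).1
      have hi0fr : q i0 ≠ 0 ∧ q i0 ≠ 1 := (mem_filter.mp hi0F).2
      have hrest : ∀ i ∈ S.erase i0, q i = 0 ∨ q i = 1 := by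
        intro i hi
        by_contra h'
        push_neg at h'
        have hmem : i ∈ F := mem_filter.mpr ⟨(mem_erase.mp hi).2, h'⟩
        rw [hi0] at hmem
        exact (mem_erase.mp hi).1 (mem_singleton.mp hmem)
      set c := (S.erase i0).filter (fun i => q i = 1) with hc
      have h1' : ∑ i ∈ c, q i = c.card := by
        rw [Finset.sum_congr rfl (fun i hi => (mem_filter.mp hi).2)]; simp [hc]
      have h2' : ∑ i ∈ (S.erase i0).filter (fun i => ¬ q i = 1), q i = 0 := by
        apply Finset.sum_eq_zero
        intro i hi
        rcases hrest i (mem_filter.mp hi).1 with h | h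
        · exact h
        · exact absurd h (mem_filter.mp hi).2
      have hsumrest : ∑ i ∈ S.erase i0, q i = c.card := by
        rw [← Finset.sum_filter_add_sum_filter_not (S.erase i0) (fun i => q i = 1) q, h1', h2',
          add_zero]
      have hq0 : 0 < q i0 := lt_of_le_of_ne (h0 i0 hi0S) (Ne.symm hi0fr.1)
      have hq1 : q i0 < 1 := lt_of_le_of_ne (h1 i0 hi0S) hi0fr.2
      have hsum' : (c.card : ℝ) + q i0 = m := by
        rw [← hsumrest, Finset.sum_erase_add S q hi0S]; exact hsum
      have hlt : (c.card : ℝ) < m := by linarith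
      have hgt : (m : ℝ) < c.card + 1 := by linarith
      have hlt' : c.card < m := by exact_mod_cast hlt
      have hgt' : m < c.card + 1 := by exact_mod_cast hgt
      omega
    obtain ⟨i, hiF, j, hjF, hij⟩ := Finset.one_lt_card.mp hF2
    have hiS : i ∈ S := (mem_filter.mp hiF).1
    have hjS : j ∈ S := (mem_filter.mp hjF).1
    have hifr : q i ≠ 0 ∧ q i ≠ 1 := (mem_filter.mp hiF).2
    have hjfr : q j ≠ 0 ∧ q j ≠ 1 := (mem_filter.mp hjF).2
    have hi0 : 0 < q i := lt_of_le_of_ne (h0 i hiS) (Ne.symm hifr.1)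
    have hi1 : q i < 1 := lt_of_le_of_ne (h1 i hiS) hifr.2
    have hj0 : 0 < q j := lt_of_le_of_ne (h0 j hjS) (Ne.symm hjfr.1)
    have hj1 : q j < 1 := lt_of_le_of_ne (h1 j hjS) hjfr.2
    set t1 := min (1 - q i) (q j) with ht1
    set t2 := min (q i) (1 - q j) with ht2
    have ht1pos : 0 < t1 := lt_min (by linarith) hj0
    have ht2pos : 0 < t2 := lt_min hi0 (by linarith)
    have ht1a : t1 ≤ 1 - q i := min_le_left _ _
    have ht1b : t1 ≤ q j := min_le_right _ _
    have ht2a : t2 ≤ q i := min_le_left _ _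
    have ht2b : t2 ≤ 1 - q j := min_le_right _ _
    set q1 : ι → ℝ := fun x => q x + (if x = i then t1 else 0) + (if x = j then -t1 else 0)
      with hq1def
    set q2 : ι → ℝ := fun x => q x + (if x = i then -t2 else 0) + (if x = j then t2 else 0)
      with hq2def
    have hq1i : q1 i = q i + t1 := by simp [hq1def, hij]
    have hq1j : q1 j = q j - t1 := by simp [hq1def, Ne.symm hij]; ring
    have hq2i : q2 i = q i - t2 := by simp [hq2def, hij]; ring
    have hq2j : q2 j = q j + t2 := by simp [hq2def, Ne.symm hij]
    have hq1other : ∀ x, x ≠ i → x ≠ j → q1 x = q x := by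
      intro x hxi hxj; simp [hq1def, hxi, hxj]
    have hq2other : ∀ x, x ≠ i → x ≠ j → q2 x = q x := by
      intro x hxi hxj; simp [hq2def, hxi, hxj]
    -- bounds
    have hb1 : (∀ x ∈ S, 0 ≤ q1 x) ∧ (∀ x ∈ S, q1 x ≤ 1) := by
      constructor <;> intro x hx <;>
      · by_cases hxi : x = i
        · subst hxi; rw [hq1i]; first | linarith | linarith
        · by_cases hxj : x = j
          · subst hxj; rw [hq1j]; first | linarith | linarith
          · rw [hq1other x hxi hxj]; first | exact h0 x hx | exact h1 x hx
    have hb2 : (∀ x ∈ S, 0 ≤ q2 x) ∧ (∀ x ∈ S, q2 x ≤ 1) := by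
      constructor <;> intro x hx <;>
      · by_cases hxi : x = i
        · subst hxi; rw [hq2i]; first | linarith | linarith
        · by_cases hxj : x = j
          · subst hxj; rw [hq2j]; first | linarith | linarith
          · rw [hq2other x hxi hxj]; first | exact h0 x hx | exact h1 x hx
    -- sums
    have hsum1 : ∑ x ∈ S, q1 x = m := by
      simp only [hq1def]
      rw [Finset.sum_add_distrib, Finset.sum_add_distrib,
        Finset.sum_ite_eq' S i (fun _ => t1), Finset.sum_ite_eq' S j (fun _ => -t1)]
      simp [hiS, hjS, hsum]
    have hsum2 : ∑ x ∈ S, q2 x = m := by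
      simp only [hq2def]
      rw [Finset.sum_add_distrib, Finset.sum_add_distrib,
        Finset.sum_ite_eq' S i (fun _ => -t2), Finset.sum_ite_eq' S j (fun _ => t2)]
      simp [hiS, hjS, hsum]
    -- filter cards
    have hcard1 : (S.filter (fun x => q1 x ≠ 0 ∧ q1 x ≠ 1)).card ≤ N := by
      rcases min_cases (1 - q i) (q j) with ⟨he, _⟩ | ⟨he, _⟩
      · have hi1' : q1 i = 1 := by rw [hq1i, ← ht1] at *; rw [hq1i]; linarith [he]
        have hsub : S.filter (fun x => q1 x ≠ 0 ∧ q1 x ≠ 1) ⊆ F.erase i := by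
          intro x hx
          obtain ⟨hxS, hxfr⟩ := mem_filter.mp hx
          have hxi : x ≠ i := by rintro rfl; exact hxfr.2 hi1'
          refine mem_erase.mpr ⟨hxi, ?_⟩
          by_cases hxj : x = j
          · subst hxj; exact hjF
          · rw [hq1other x hxi hxj] at hxfr
            exact mem_filter.mpr ⟨hxS, hxfr⟩
        calc _ ≤ (F.erase i).card := card_le_card hsub
          _ = N := by rw [card_erase_of_mem hiF]; omega
      · have hj0' : q1 j = 0 := by rw [hq1j]; rw [← ht1] at he; linarith [he]
        have hsub : S.filter (fun x => q1 x ≠ 0 ∧ q1 x ≠ 1) ⊆ F.erase j := by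
          intro x hx
          obtain ⟨hxS, hxfr⟩ := mem_filter.mp hx
          have hxj : x ≠ j := by rintro rfl; exact hxfr.1 hj0'
          refine mem_erase.mpr ⟨hxj, ?_⟩
          by_cases hxi : x = i
          · subst hxi; exact hiF
          · rw [hq1other x hxi hxj] at hxfr
            exact mem_filter.mpr ⟨hxS, hxfr⟩
        calc _ ≤ (F.erase j).card := card_le_card hsub
          _ = N := by rw [card_erase_of_mem hjF]; omega
    have hcard2 : (S.filter (fun x => q2 x ≠ 0 ∧ q2 x ≠ 1)).card ≤ N := by
      rcases min_cases (q i) (1 - q j) with ⟨he, _⟩ | ⟨he, _⟩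
      · have hi0' : q2 i = 0 := by rw [hq2i]; rw [← ht2] at he; linarith [he]
        have hsub : S.filter (fun x => q2 x ≠ 0 ∧ q2 x ≠ 1) ⊆ F.erase i := by
          intro x hx
          obtain ⟨hxS, hxfr⟩ := mem_filter.mp hx
          have hxi : x ≠ i := by rintro rfl; exact hxfr.1 hi0'
          refine mem_erase.mpr ⟨hxi, ?_⟩
          by_cases hxj : x = j
          · subst hxj; exact hjF
          · rw [hq2other x hxi hxj] at hxfr
            exact mem_filter.mpr ⟨hxS, hxfr⟩
        calc _ ≤ (F.erase i).card := card_le_card hsub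
          _ = N := by rw [card_erase_of_mem hiF]; omega
      · have hj1' : q2 j = 1 := by rw [hq2j]; rw [← ht2] at he; linarith [he]
        have hsub : S.filter (fun x => q2 x ≠ 0 ∧ q2 x ≠ 1) ⊆ F.erase j := by
          intro x hx
          obtain ⟨hxS, hxfr⟩ := mem_filter.mp hx
          have hxj : x ≠ j := by rintro rfl; exact hxfr.2 hj1'
          refine mem_erase.mpr ⟨hxj, ?_⟩
          by_cases hxi : x = i
          · subst hxi; exact hiF
          · rw [hq2other x hxi hxj] at hxfr
            exact mem_filter.mpr ⟨hxS, hxfr⟩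
        calc _ ≤ (F.erase j).card := card_le_card hsub
          _ = N := by rw [card_erase_of_mem hjF]; omega
    obtain ⟨μ1, hμ1_0, hμ1_sum, hμ1_marg⟩ := ih q1 hcard1 hb1.1 hb1.2 hsum1
    obtain ⟨μ2, hμ2_0, hμ2_sum, hμ2_marg⟩ := ih q2 hcard2 hb2.1 hb2.2 hsum2
    set lam := t2 / (t1 + t2) with hlam
    have hden : 0 < t1 + t2 := by linarith
    have hlam0 : 0 ≤ lam := div_nonneg ht2pos.le hden.le
    have hlam1 : lam ≤ 1 := by
      rw [hlam, div_le_one hden]; linarith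
    have hconv : ∀ x, lam * q1 x + (1 - lam) * q2 x = q x := by
      intro x
      by_cases hxi : x = i
      · subst hxi
        rw [hq1i, hq2i, hlam]
        field_simp
        ring
      · by_cases hxj : x = j
        · subst hxj
          rw [hq1j, hq2j, hlam]
          field_simp
          ring
        · rw [hq1other x hxi hxj, hq2other x hxi hxj]; ring
    refine ⟨fun A => lam * μ1 A + (1 - lam) * μ2 A, ?_, ?_, ?_⟩
    · intro A
      have := hμ1_0 A; have := hμ2_0 A
      have h1l : 0 ≤ 1 - lam := by linarith
      positivity
    · rw [Finset.sum_add_distrib, ← Finset.mul_sum, ← Finset.mul_sum, hμ1_sum, hμ2_sum]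
      ring
    · intro x hx
      have hsplit : ∀ A, (if x ∈ A then lam * μ1 A + (1 - lam) * μ2 A else 0)
          = lam * (if x ∈ A then μ1 A else 0) + (1 - lam) * (if x ∈ A then μ2 A else 0) := by
        intro A; by_cases h : x ∈ A <;> simp [h]
      rw [Finset.sum_congr rfl (fun A _ => hsplit A), Finset.sum_add_distrib,
        ← Finset.mul_sum, ← Finset.mul_sum, hμ1_marg x hx, hμ2_marg x hx, hconv x]

end helpers

/-- The log-loss `ℓ_1(q) = log (1/q)`, valued in `EReal` so that `ℓ_1(0) = ⊤`. -/
noncomputable def logLossE (q : ℝ) : EReal :=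
  if q = 0 then ⊤ else ((Real.log (1 / q) : ℝ) : EReal)

/-- `s* = min{ r ∈ {1,…,k} : (k−r+1) p_r ≤ ∑_{i=r}^n p_i }`. -/
noncomputable def sstar1 (p : ℕ → ℝ) (k n : ℕ) : ℕ :=
  sInf {r : ℕ | 1 ≤ r ∧ r ≤ k ∧
    ((k : ℝ) - r + 1) * p r ≤ ∑ i ∈ Finset.Icc r n, p i}

/-- `H(X) − H(p_1,…,p_{s*−1}, ∑_{i=s*}^n p_i) − (∑_{i=s*}^n p_i) log (k−s*+1)`. -/
noncomputable def MElog (p : ℕ → ℝ) (k n : ℕ) : ℝ :=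
  (∑ i ∈ Finset.Icc 1 n, p i * Real.log (1 / p i)) -
    ((∑ i ∈ Finset.Icc 1 (sstar1 p k n - 1), p i * Real.log (1 / p i)) +
      (∑ i ∈ Finset.Icc (sstar1 p k n) n, p i) *
        Real.log (1 / ∑ i ∈ Finset.Icc (sstar1 p k n) n, p i)) -
    (∑ i ∈ Finset.Icc (sstar1 p k n) n, p i) *
      Real.log ((k : ℝ) - (sstar1 p k n : ℕ) + 1)

set_option maxHeartbeats 4000000 in
/-- The minimal expected log-loss under `k` guesses, for a pmf
`p_1 ≥ … ≥ p_n > 0` and `1 ≤ k < n`, equals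
`H(X) − H(p_1,…,p_{s*−1}, ∑_{i=s*}^n p_i) − (∑_{i=s*}^n p_i) log (k−s*+1)`. -/
theorem stmt13 (n k : ℕ) (hk : 1 ≤ k) (hkn : k < n)
    (p : ℕ → ℝ) (hpos : ∀ i ∈ Finset.Icc 1 n, 0 < p i)
    (hmono : ∀ i j, 1 ≤ i → i ≤ j → j ≤ n → p j ≤ p i)
    (hsum : ∑ i ∈ Finset.Icc 1 n, p i = 1) :
    IsLeast
      {v : EReal | ∃ Q : (Fin k → Fin n) → ℝ, IsPMF Q ∧
        v = ∑ x : Fin n, ((p (x.1 + 1) : ℝ) : EReal) * logLossE (coversG Q x)}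
      ((MElog p k n : ℝ) : EReal) := by
  classical
  set s := sstar1 p k n with hs_def
  -- the defining set of s*
  have hSne : {r : ℕ | 1 ≤ r ∧ r ≤ k ∧
      ((k : ℝ) - r + 1) * p r ≤ ∑ i ∈ Finset.Icc r n, p i}.Nonempty := by
    refine ⟨k, hk, le_refl k, ?_⟩
    have h1 : ((k : ℝ) - k + 1) = 1 := by ring
    rw [h1, one_mul]
    apply Finset.single_le_sum (f := p)
    · intro i hi
      exact (hpos i (Finset.mem_Icc.mpr ⟨le_trans hk (Finset.mem_Icc.mp hi).1,
        (Finset.mem_Icc.mp hi).2⟩)).le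
    · exact Finset.mem_Icc.mpr ⟨le_refl k, hkn.le⟩
  have hs_mem := Nat.sInf_mem hSne
  have hs1 : 1 ≤ s := hs_mem.1
  have hsk : s ≤ k := hs_mem.2.1
  have hkey : ((k : ℝ) - s + 1) * p s ≤ ∑ i ∈ Finset.Icc s n, p i := hs_mem.2.2
  have hs_min : ∀ r, 1 ≤ r → r < s →
      (∑ i ∈ Finset.Icc r n, p i) < ((k : ℝ) - r + 1) * p r := by
    intro r hr1 hrs
    have hnot := Nat.notMem_of_lt_sInf (s := {r : ℕ | 1 ≤ r ∧ r ≤ k ∧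
      ((k : ℝ) - r + 1) * p r ≤ ∑ i ∈ Finset.Icc r n, p i}) hrs
    simp only [Set.mem_setOf_eq, not_and] at hnot
    have := hnot hr1 (by omega)
    linarith [this]
  set T := ∑ i ∈ Finset.Icc s n, p i with hT_def
  set M : ℝ := (k : ℝ) - s + 1 with hM_def
  set m := k - s + 1 with hm_def
  have hMm : M = (m : ℝ) := by
    rw [hm_def, hM_def]
    push_cast [Nat.cast_sub hsk]
    ring
  have hM1 : (1 : ℝ) ≤ M := by
    rw [hM_def]
    have : (s : ℝ) ≤ k := by exact_mod_cast hsk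
    linarith
  have hM0 : (0 : ℝ) < M := lt_of_lt_of_le one_pos hM1
  have hT0 : 0 < T := by
    rw [hT_def]
    apply Finset.sum_pos
    · intro i hi
      exact hpos i (Finset.mem_Icc.mpr ⟨le_trans hs1 (Finset.mem_Icc.mp hi).1,
        (Finset.mem_Icc.mp hi).2⟩)
    · exact ⟨s, Finset.mem_Icc.mpr ⟨le_refl s, by omega⟩⟩
  -- head bound : for 1 ≤ i < s, T < M * p i
  have hhead : ∀ i, 1 ≤ i → i < s → T < M * p i := by
    intro i hi1 his
    have hs2 : 2 ≤ s := by omega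
    have hr := hs_min (s - 1) (by omega) (by omega)
    have hsplit : ∑ j ∈ Finset.Icc (s - 1) n, p j = p (s - 1) + T := by
      rw [hT_def]
      have h2 : Finset.Icc s n = Finset.Ioc (s - 1) n := by
        rw [← Finset.Icc_add_one_left_eq_Ioc]; congr 1; omega
      rw [h2, Finset.Icc_eq_cons_Ioc (by omega : s - 1 ≤ n), Finset.sum_cons]
    have hcast : ((s - 1 : ℕ) : ℝ) = (s : ℝ) - 1 := by
      push_cast [Nat.cast_sub hs1]; ring
    rw [hsplit, hcast] at hr
    have hr' : T < M * p (s - 1) := by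
      rw [hM_def]; nlinarith [hr]
    have hmono' : p (s - 1) ≤ p i := hmono i (s - 1) hi1 (by omega) (by omega)
    calc T < M * p (s - 1) := hr'
      _ ≤ M * p i := by nlinarith [hM0]
  -- the optimal coverage profile
  set cstar : ℕ → ℝ := fun i => if i < s then 1 else M * p i / T with hcstar_def
  have hcs_pos : ∀ i ∈ Finset.Icc 1 n, 0 < cstar i := by
    intro i hi
    rw [hcstar_def]
    dsimp only
    split
    · norm_num
    · exact div_pos (mul_pos hM0 (hpos i hi)) hT0
  have hcs_le1 : ∀ i ∈ Finset.Icc 1 n, cstar i ≤ 1 := by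
    intro i hi
    rw [hcstar_def]
    dsimp only
    split
    · exact le_refl 1
    · rename_i h
      push_neg at h
      have hpi : p i ≤ p s := hmono s i hs1 h (Finset.mem_Icc.mp hi).2
      rw [div_le_one hT0]
      calc M * p i ≤ M * p s := by nlinarith [hM0]
        _ ≤ T := by rw [hM_def]; exact hkey
  -- value of the optimal profile
  have hs1n : s - 1 ≤ n := by omega
  have hpne : ∀ i ∈ Finset.Icc s n, p i ≠ 0 := by
    intro i hi
    exact (hpos i (Finset.mem_Icc.mpr ⟨le_trans hs1 (Finset.mem_Icc.mp hi).1,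
      (Finset.mem_Icc.mp hi).2⟩)).ne'
  have hval : ∑ i ∈ Finset.Icc 1 n, p i * Real.log (1 / cstar i) = MElog p k n := by
    have hhead0 : ∑ i ∈ Finset.Icc 1 (s - 1), p i * Real.log (1 / cstar i) = 0 := by
      apply Finset.sum_eq_zero
      intro i hi
      have his : i < s := by have := (Finset.mem_Icc.mp hi).2; omega
      rw [hcstar_def]
      simp [his]
    have htail : ∑ i ∈ Finset.Icc s n, p i * Real.log (1 / cstar i)
        = ∑ i ∈ Finset.Icc s n, (p i * (Real.log T - Real.log M) + p i * Real.log (1 / p i)) := by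
      apply Finset.sum_congr rfl
      intro i hi
      have his : ¬ i < s := by have := (Finset.mem_Icc.mp hi).1; omega
      have hpi : p i ≠ 0 := hpne i hi
      rw [hcstar_def]
      dsimp only
      rw [if_neg his, one_div_div, Real.log_div hT0.ne' (mul_ne_zero hM0.ne' hpi),
        Real.log_mul hM0.ne' hpi, one_div, Real.log_inv]
      ring
    have htail2 : ∑ i ∈ Finset.Icc s n, (p i * (Real.log T - Real.log M)
        + p i * Real.log (1 / p i))
        = T * (Real.log T - Real.log M) + ∑ i ∈ Finset.Icc s n, p i * Real.log (1 / p i) := by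
      rw [Finset.sum_add_distrib, ← Finset.sum_mul, ← hT_def]
    have hsplitv := sum_split hs1 hs1n (fun i => p i * Real.log (1 / cstar i))
    have hsplitH := sum_split hs1 hs1n (fun i => p i * Real.log (1 / p i))
    rw [← hsplitv, hhead0, zero_add, htail, htail2]
    rw [MElog]
    rw [← hs_def, ← hT_def, ← hM_def, ← hsplitH, one_div T, Real.log_inv]
    ring
  -- core lower bound
  have hlb : ∀ c : ℕ → ℝ, (∀ i ∈ Finset.Icc 1 n, 0 < c i) →
      (∀ i ∈ Finset.Icc 1 n, c i ≤ 1) → (∑ i ∈ Finset.Icc 1 n, c i ≤ (k : ℝ)) →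
      MElog p k n ≤ ∑ i ∈ Finset.Icc 1 n, p i * Real.log (1 / c i) := by
    intro c hc0 hc1 hck
    have hterm : ∀ i ∈ Finset.Icc 1 n, p i * Real.log (1 / cstar i)
        + p i * (1 - c i / cstar i) ≤ p i * Real.log (1 / c i) := by
      intro i hi
      have hc := hc0 i hi
      have hcs := hcs_pos i hi
      have hp := hpos i hi
      have hlog : Real.log (c i / cstar i) ≤ c i / cstar i - 1 :=
        Real.log_le_sub_one_of_pos (div_pos hc hcs)
      rw [Real.log_div hc.ne' hcs.ne'] at hlog
      rw [one_div, Real.log_inv, one_div, Real.log_inv]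
      nlinarith [mul_le_mul_of_nonneg_left hlog hp.le]
    have hsum_bound : ∑ i ∈ Finset.Icc 1 n, p i * Real.log (1 / cstar i)
        + ∑ i ∈ Finset.Icc 1 n, p i * (1 - c i / cstar i)
        ≤ ∑ i ∈ Finset.Icc 1 n, p i * Real.log (1 / c i) := by
      rw [← Finset.sum_add_distrib]
      exact Finset.sum_le_sum hterm
    set D := ∑ i ∈ Finset.Icc 1 n, p i * (c i / cstar i) with hD_def
    have hstep3 : ∑ i ∈ Finset.Icc 1 n, p i * (1 - c i / cstar i) = 1 - D := by
      have h' : ∑ i ∈ Finset.Icc 1 n, p i * (1 - c i / cstar i)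
          = (∑ i ∈ Finset.Icc 1 n, p i) - D := by
        rw [hD_def, ← Finset.sum_sub_distrib]
        exact Finset.sum_congr rfl (fun i _ => by ring)
      rw [h', hsum]
    -- split D
    set A := ∑ i ∈ Finset.Icc 1 (s - 1), c i with hA_def
    set B := ∑ i ∈ Finset.Icc s n, c i with hB_def
    set P := ∑ i ∈ Finset.Icc 1 (s - 1), p i with hP_def
    set Dh := ∑ i ∈ Finset.Icc 1 (s - 1), p i * c i with hDh_def
    have hDsplit : D = Dh + B * (T / M) := by
      rw [hD_def, ← sum_split hs1 hs1n (fun i => p i * (c i / cstar i))]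
      congr 1
      · rw [hDh_def]
        apply Finset.sum_congr rfl
        intro i hi
        have his : i < s := by have := (Finset.mem_Icc.mp hi).2; omega
        rw [hcstar_def]
        dsimp only
        rw [if_pos his, div_one]
      · rw [hB_def, Finset.sum_mul]
        apply Finset.sum_congr rfl
        intro i hi
        have his : ¬ i < s := by have := (Finset.mem_Icc.mp hi).1; omega
        have hpi : p i ≠ 0 := hpne i hi
        rw [hcstar_def]
        dsimp only
        rw [if_neg his]
        field_simp
    have hAB : A + B ≤ (k : ℝ) := by
      have := sum_split hs1 hs1n c
      rw [← hA_def, ← hB_def] at this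
      linarith [this, hck]
    have hPT : P + T = 1 := by
      have := sum_split hs1 hs1n p
      rw [← hP_def, ← hT_def] at this
      linarith [this, hsum]
    have hTM : 0 < T / M := div_pos hT0 hM0
    have hheadmem : ∀ i ∈ Finset.Icc 1 (s - 1), 1 ≤ i ∧ i < s ∧ i ≤ n := by
      intro i hi
      have h1 := (Finset.mem_Icc.mp hi).1
      have h2 := (Finset.mem_Icc.mp hi).2
      exact ⟨h1, by omega, by omega⟩
    have hhn : 0 ≤ ∑ i ∈ Finset.Icc 1 (s - 1), (p i - T / M) * (1 - c i) := by
      apply Finset.sum_nonneg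
      intro i hi
      obtain ⟨h1, h2, h3⟩ := hheadmem i hi
      have hTMp : T / M ≤ p i := by
        rw [div_le_iff₀ hM0]
        linarith [hhead i h1 h2]
      have hci : c i ≤ 1 := hc1 i (Finset.mem_Icc.mpr ⟨h1, h3⟩)
      exact mul_nonneg (by linarith) (by linarith)
    have hexp : ∑ i ∈ Finset.Icc 1 (s - 1), (p i - T / M) * (1 - c i)
        = (P - Dh) - (((s - 1 : ℕ) : ℝ) * (T / M) - (T / M) * A) := by
      have e : ∀ i ∈ Finset.Icc 1 (s - 1),
          (p i - T / M) * (1 - c i) = (p i - p i * c i) - (T / M - T / M * c i) :=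
        fun i _ => by ring
      rw [Finset.sum_congr rfl e, Finset.sum_sub_distrib, Finset.sum_sub_distrib,
        Finset.sum_sub_distrib, ← Finset.mul_sum, Finset.sum_const, Nat.card_Icc,
        nsmul_eq_mul, ← hA_def, ← hP_def, ← hDh_def]
      simp only [Nat.add_sub_cancel]
    have hcast : ((s - 1 : ℕ) : ℝ) = (s : ℝ) - 1 := by
      push_cast [Nat.cast_sub hs1]; ring
    have hkM : (k : ℝ) = M + ((s : ℝ) - 1) := by rw [hM_def]; ring
    have e1 : (T / M) * (A + B - ((s : ℝ) - 1)) ≤ (T / M) * M :=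
      mul_le_mul_of_nonneg_left (by linarith) hTM.le
    have e2 : (T / M) * M = T := div_mul_cancel₀ T hM0.ne'
    rw [hcast] at hexp
    have hD1 : D ≤ 1 := by
      linarith [hDsplit, hhn, hexp, e1, e2, hPT]
    linarith [hsum_bound, hstep3, hval, hD1]
  -- coverage facts for an arbitrary strategy
  have hcov_nonneg : ∀ Q : (Fin k → Fin n) → ℝ, IsPMF Q → ∀ x, 0 ≤ coversG Q x := by
    intro Q hQ x
    rw [coversG]
    apply Finset.sum_nonneg
    intro a _
    split
    · exact hQ.1 a
    · exact le_refl 0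
  have hcov_le1 : ∀ Q : (Fin k → Fin n) → ℝ, IsPMF Q → ∀ x, coversG Q x ≤ 1 := by
    intro Q hQ x
    rw [coversG, ← hQ.2]
    apply Finset.sum_le_sum
    intro a _
    split
    · exact le_refl _
    · exact hQ.1 a
  have hcov_sum : ∀ Q : (Fin k → Fin n) → ℝ, IsPMF Q →
      ∑ x : Fin n, coversG Q x ≤ (k : ℝ) := by
    intro Q hQ
    have h1 : ∑ x : Fin n, coversG Q x
        = ∑ a : Fin k → Fin n, ∑ x : Fin n, (if ∃ j, a j = x then Q a else 0) := by
      rw [Finset.sum_comm]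
      apply Finset.sum_congr rfl
      intro x _
      rw [coversG]
      apply Finset.sum_congr rfl
      intro a _
      by_cases h : ∃ j, a j = x
      · rw [if_pos h, if_pos h]
      · rw [if_neg h, if_neg h]
    rw [h1]
    have h2 : ∀ a : Fin k → Fin n,
        ∑ x : Fin n, (if ∃ j, a j = x then Q a else 0) ≤ (k : ℝ) * Q a := by
      intro a
      have hpt : ∀ x : Fin n, (if ∃ j, a j = x then Q a else 0)
          ≤ ∑ j : Fin k, (if a j = x then Q a else 0) := by
        intro x
        by_cases h : ∃ j, a j = x
        · obtain ⟨j0, hj0⟩ := h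
          rw [if_pos ⟨j0, hj0⟩]
          have := Finset.single_le_sum
            (f := fun j : Fin k => (if a j = x then Q a else 0))
            (fun j _ => by split; exacts [hQ.1 a, le_refl 0]) (Finset.mem_univ j0)
          rw [if_pos hj0] at this
          exact this
        · rw [if_neg h]
          exact Finset.sum_nonneg (fun j _ => by split; exacts [hQ.1 a, le_refl 0])
      calc ∑ x : Fin n, (if ∃ j, a j = x then Q a else 0)
          ≤ ∑ x : Fin n, ∑ j : Fin k, (if a j = x then Q a else 0) :=
            Finset.sum_le_sum (fun x _ => hpt x)
        _ = ∑ j : Fin k, ∑ x : Fin n, (if a j = x then Q a else 0) := Finset.sum_comm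
        _ = ∑ j : Fin k, Q a := by
            apply Finset.sum_congr rfl
            intro j _
            rw [Finset.sum_ite_eq Finset.univ (a j) (fun _ => Q a)]
            simp
        _ = (k : ℝ) * Q a := by
            rw [Finset.sum_const, Finset.card_univ, Fintype.card_fin, nsmul_eq_mul]
    calc ∑ a : Fin k → Fin n, ∑ x : Fin n, (if ∃ j, a j = x then Q a else 0)
        ≤ ∑ a : Fin k → Fin n, (k : ℝ) * Q a := Finset.sum_le_sum (fun a _ => h2 a)
      _ = (k : ℝ) := by rw [← Finset.mul_sum, hQ.2, mul_one]
  -- the lower bound for every strategy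
  have hLB : ∀ Q : (Fin k → Fin n) → ℝ, IsPMF Q →
      ((MElog p k n : ℝ) : EReal)
        ≤ ∑ x : Fin n, ((p (x.1 + 1) : ℝ) : EReal) * logLossE (coversG Q x) := by
    intro Q hQ
    by_cases hzero : ∃ x : Fin n, coversG Q x = 0
    · obtain ⟨x0, hx0⟩ := hzero
      have hterm_nonneg : ∀ x : Fin n,
          (0 : EReal) ≤ ((p (x.1 + 1) : ℝ) : EReal) * logLossE (coversG Q x) := by
        intro x
        apply mul_nonneg
        · exact_mod_cast (hpos (x.1 + 1) (Finset.mem_Icc.mpr ⟨by omega, by omega⟩)).le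
        · rw [logLossE]
          split
          · exact le_top
          · rename_i h
            have hc0 : 0 < coversG Q x := lt_of_le_of_ne (hcov_nonneg Q hQ x) (Ne.symm h)
            have : (0 : ℝ) ≤ Real.log (1 / coversG Q x) :=
              Real.log_nonneg (one_le_one_div hc0 (hcov_le1 Q hQ x))
            exact_mod_cast this
      have htop : ∑ x : Fin n, ((p (x.1 + 1) : ℝ) : EReal) * logLossE (coversG Q x) = ⊤ := by
        rw [← Finset.add_sum_erase _ _ (Finset.mem_univ x0)]
        have h1 : ((p (x0.1 + 1) : ℝ) : EReal) * logLossE (coversG Q x0) = ⊤ := by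
          rw [logLossE, if_pos hx0]
          exact EReal.coe_mul_top_of_pos
            (hpos (x0.1 + 1) (Finset.mem_Icc.mpr ⟨by omega, by omega⟩))
        rw [h1]
        apply EReal.top_add_of_ne_bot
        have h2 : (0 : EReal) ≤ ∑ x ∈ Finset.univ.erase x0,
            ((p (x.1 + 1) : ℝ) : EReal) * logLossE (coversG Q x) :=
          Finset.sum_nonneg (fun x _ => hterm_nonneg x)
        exact ne_of_gt (lt_of_lt_of_le EReal.bot_lt_zero h2)
      rw [htop]
      exact le_top
    · push_neg at hzero
      have hconv : ∑ x : Fin n, ((p (x.1 + 1) : ℝ) : EReal) * logLossE (coversG Q x)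
          = ((∑ x : Fin n, p (x.1 + 1) * Real.log (1 / coversG Q x) : ℝ) : EReal) := by
        rw [ereal_coe_sum]
        apply Finset.sum_congr rfl
        intro x _
        rw [logLossE, if_neg (hzero x), ← EReal.coe_mul]
      rw [hconv, EReal.coe_le_coe_iff]
      set cc : ℕ → ℝ := fun i =>
        if h : 1 ≤ i ∧ i ≤ n then coversG Q ⟨i - 1, by omega⟩ else 1 with hcc_def
      have hccx : ∀ x : Fin n, cc (x.1 + 1) = coversG Q x := by
        intro x
        rw [hcc_def]
        dsimp only
        rw [dif_pos ⟨by omega, by omega⟩]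
        have hxx : (⟨x.1 + 1 - 1, by omega⟩ : Fin n) = x := Fin.ext (by simp)
        rw [hxx]
      have h1 : ∑ x : Fin n, p (x.1 + 1) * Real.log (1 / coversG Q x)
          = ∑ i ∈ Finset.Icc 1 n, p i * Real.log (1 / cc i) := by
        rw [← sum_fin_eq_sum_Icc n (fun i => p i * Real.log (1 / cc i))]
        exact Finset.sum_congr rfl (fun x _ => by rw [hccx x])
      have h2 : ∑ i ∈ Finset.Icc 1 n, cc i ≤ (k : ℝ) := by
        rw [← sum_fin_eq_sum_Icc n cc]
        calc ∑ x : Fin n, cc (x.1 + 1) = ∑ x : Fin n, coversG Q x :=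
              Finset.sum_congr rfl (fun x _ => hccx x)
          _ ≤ (k : ℝ) := hcov_sum Q hQ
      rw [h1]
      apply hlb cc
      · intro i hi
        have hi' := Finset.mem_Icc.mp hi
        rw [hcc_def]
        dsimp only
        rw [dif_pos ⟨hi'.1, hi'.2⟩]
        exact lt_of_le_of_ne (hcov_nonneg Q hQ _) (Ne.symm (hzero _))
      · intro i hi
        have hi' := Finset.mem_Icc.mp hi
        rw [hcc_def]
        dsimp only
        rw [dif_pos ⟨hi'.1, hi'.2⟩]
        exact hcov_le1 Q hQ _
      · exact h2
  -- Construction of an optimal strategy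
  set SS : Finset (Fin n) := Finset.univ.filter (fun x => s ≤ x.1 + 1) with hSS_def
  set q : Fin n → ℝ := fun x => cstar (x.1 + 1) with hq_def
  have hmemIcc : ∀ x : Fin n, x.1 + 1 ∈ Finset.Icc 1 n := by
    intro x
    exact Finset.mem_Icc.mpr ⟨by omega, by omega⟩
  have hqtail : ∀ x : Fin n, x ∈ SS → q x = M * p (x.1 + 1) / T := by
    intro x hx
    rw [hSS_def] at hx
    have hsx : s ≤ x.1 + 1 := (Finset.mem_filter.mp hx).2
    rw [hq_def, hcstar_def]
    dsimp only
    rw [if_neg (by omega)]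
  have hSSp : ∑ x ∈ SS, p (x.1 + 1) = T := by
    rw [hSS_def, Finset.sum_filter,
      sum_fin_eq_sum_Icc n (fun i => if s ≤ i then p i else 0), ← Finset.sum_filter]
    rw [hT_def]
    congr 1
    ext i
    simp only [Finset.mem_filter, Finset.mem_Icc]
    omega
  have hqsum : ∑ x ∈ SS, q x = (m : ℝ) := by
    rw [Finset.sum_congr rfl hqtail]
    have e : ∀ x : Fin n, x ∈ SS → M * p (x.1 + 1) / T = p (x.1 + 1) * (M / T) :=
      fun x _ => by ring
    rw [Finset.sum_congr rfl e, ← Finset.sum_mul, hSSp]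
    rw [← hMm]
    field_simp
  obtain ⟨μ, hμ0, hμsum, hμmarg⟩ :=
    exists_rounding SS m ((SS.filter (fun x => q x ≠ 0 ∧ q x ≠ 1)).card) q (le_refl _)
      (fun x hx => (hcs_pos _ (hmemIcc x)).le)
      (fun x hx => hcs_le1 _ (hmemIcc x)) hqsum
  -- tuples associated to subsets
  set tup : Finset (Fin n) → (Fin k → Fin n) := fun A => fun j =>
    if hj : j.1 < s - 1 then ⟨j.1, by have := j.2; omega⟩
    else if hA : A.card = m then
      A.orderEmbOfFin hA ⟨j.1 - (s - 1), by have := j.2; omega⟩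
    else ⟨0, by omega⟩ with htup_def
  set QQ : (Fin k → Fin n) → ℝ :=
    fun a => ∑ A ∈ SS.powersetCard m, (if a = tup A then μ A else 0) with hQQ_def
  have hQQpmf : IsPMF QQ := by
    constructor
    · intro a
      rw [hQQ_def]
      apply Finset.sum_nonneg
      intro A _
      split
      · exact hμ0 A
      · exact le_refl 0
    · rw [hQQ_def]
      rw [Finset.sum_comm]
      rw [← hμsum]
      apply Finset.sum_congr rfl
      intro A _
      rw [Finset.sum_ite_eq' Finset.univ (tup A) (fun _ => μ A)]
      simp
  have hiff : ∀ x : Fin n, ¬ x.1 + 1 < s → ∀ A ∈ SS.powersetCard m,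
      ((∃ j, tup A j = x) ↔ x ∈ A) := by
    intro x hx A hA
    obtain ⟨hAsub, hAcard⟩ := Finset.mem_powersetCard.mp hA
    constructor
    · rintro ⟨j, hj⟩
      rw [htup_def] at hj
      dsimp only at hj
      by_cases hjs : j.1 < s - 1
      · rw [dif_pos hjs] at hj
        have : j.1 = x.1 := congrArg Fin.val hj
        omega
      · rw [dif_neg hjs, dif_pos hAcard] at hj
        rw [← hj]
        exact Finset.orderEmbOfFin_mem A hAcard _
    · intro hxA
      have hrange := Finset.range_orderEmbOfFin A hAcard
      have hxr : x ∈ Set.range (A.orderEmbOfFin hAcard) := by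
        rw [hrange]; exact hxA
      obtain ⟨i, hi⟩ := hxr
      refine ⟨⟨s - 1 + i.1, by have := i.2; omega⟩, ?_⟩
      rw [htup_def]
      dsimp only
      rw [dif_neg (by omega), dif_pos hAcard]
      have hidx : (⟨s - 1 + i.1 - (s - 1), by have := i.2; omega⟩ : Fin m) = i :=
        Fin.ext (by simp)
      rw [hidx]
      exact hi
  have hcovQQ : ∀ x : Fin n, coversG QQ x = cstar (x.1 + 1) := by
    intro x
    have hcls : coversG QQ x
        = ∑ a : Fin k → Fin n, (if ∃ j, a j = x then QQ a else 0) := by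
      rw [coversG]
      apply Finset.sum_congr rfl
      intro a _
      by_cases h : ∃ j, a j = x
      · rw [if_pos h, if_pos h]
      · rw [if_neg h, if_neg h]
    rw [hcls]
    have hswap : (∑ a : Fin k → Fin n, if ∃ j, a j = x then QQ a else 0)
        = ∑ A ∈ SS.powersetCard m, (if ∃ j, tup A j = x then μ A else 0) := by
      have step1 : ∀ a : Fin k → Fin n, (if ∃ j, a j = x then QQ a else 0)
          = ∑ A ∈ SS.powersetCard m,
            (if a = tup A then (if ∃ j, a j = x then μ A else 0) else 0) := by
        intro a
        by_cases h : ∃ j, a j = x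
        · rw [if_pos h, hQQ_def]
          apply Finset.sum_congr rfl
          intro A _
          by_cases h2 : a = tup A
          · rw [if_pos h2, if_pos h2, if_pos h]
          · rw [if_neg h2, if_neg h2]
        · rw [if_neg h]
          symm
          apply Finset.sum_eq_zero
          intro A _
          by_cases h2 : a = tup A
          · rw [if_pos h2, if_neg h]
          · rw [if_neg h2]
      rw [Finset.sum_congr rfl (fun a _ => step1 a), Finset.sum_comm]
      apply Finset.sum_congr rfl
      intro A _
      rw [Finset.sum_ite_eq' Finset.univ (tup A)
        (fun a => if ∃ j, a j = x then μ A else 0)]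
      simp
    rw [hswap]
    by_cases hx : x.1 + 1 < s
    · have hall : ∀ A ∈ SS.powersetCard m, (if ∃ j, tup A j = x then μ A else 0) = μ A := by
        intro A _
        rw [if_pos]
        refine ⟨⟨x.1, by have := x.2; omega⟩, ?_⟩
        rw [htup_def]
        dsimp only
        rw [dif_pos (by omega)]
      rw [Finset.sum_congr rfl hall, hμsum, hcstar_def]
      dsimp only
      rw [if_pos hx]
    · have hSSx : x ∈ SS := by
        rw [hSS_def]
        exact Finset.mem_filter.mpr ⟨Finset.mem_univ x, by omega⟩
      have hcongr : ∀ A ∈ SS.powersetCard m,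
          (if ∃ j, tup A j = x then μ A else 0) = (if x ∈ A then μ A else 0) := by
        intro A hA
        by_cases h : x ∈ A
        · rw [if_pos h, if_pos ((hiff x hx A hA).mpr h)]
        · rw [if_neg h, if_neg (fun hc => h ((hiff x hx A hA).mp hc))]
      rw [Finset.sum_congr rfl hcongr, hμmarg x hSSx, hq_def]
  -- assemble
  constructor
  · refine ⟨QQ, hQQpmf, ?_⟩
    have h1 : ∀ x : Fin n, ((p (x.1 + 1) : ℝ) : EReal) * logLossE (coversG QQ x)
        = (((p (x.1 + 1) * Real.log (1 / cstar (x.1 + 1))) : ℝ) : EReal) := by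
      intro x
      rw [hcovQQ x, logLossE, if_neg (ne_of_gt (hcs_pos _ (hmemIcc x))), ← EReal.coe_mul]
    rw [Finset.sum_congr rfl (fun x _ => h1 x), ← ereal_coe_sum]
    rw [sum_fin_eq_sum_Icc n (fun i => p i * Real.log (1 / cstar i)), hval]
  · rintro v ⟨Q, hQpmf, rfl⟩
    exact hLB Q hQpmf
end

section
/- Let P_X be a pmf supported on a finite alphabet 𝒳 with |𝒳| ≥ 3, and let p_max = max_x P_X(x). Then the minimal expected log-loss under 2 guesses equals min over pmfs Q on 𝒳×𝒳 of Σ_x P_X(x)·log(1/Q({(a,b) : a=x or b=x})) = H(X) − h_b(max{1/2, p_max}), where H(X) is the Shannon entropy of P_X and h_b(t) = −t·log t − (1−t)·log(1−t) is the binary entropy function. -/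
open Finset

open Classical in
/-- The probability that a 2-guess strategy `Q` (a pmf on `X × X`) covers `x`. -/
noncomputable def covers2 {X : Type*} [Fintype X] (Q : X × X → ℝ) (x : X) : ℝ :=
  ∑ z : X × X, if z.1 = x ∨ z.2 = x then Q z else 0

/-- The binary entropy function `h_b(t) = −t log t − (1−t) log (1−t)`. -/
noncomputable def binEnt (t : ℝ) : ℝ :=
  -(t * Real.log t) - (1 - t) * Real.log (1 - t)

private lemma glue (a b c u v : ℝ) (hab : a ≤ b) (hbc : b ≤ c) :
    max 0 (min v b - max u a) + max 0 (min v c - max u b)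
      = max 0 (min v c - max u a) := by
  rcases le_total u b with h1 | h1 <;> rcases le_total v b with h2 | h2 <;>
    simp only [min_def, max_def] <;> split_ifs <;> linarith

private lemma sum_interval (G : ℕ → ℝ) (hG : Monotone G) (u v : ℝ) :
    ∀ n, ∑ k ∈ Finset.range n, max 0 (min v (G (k+1)) - max u (G k))
      = max 0 (min v (G n) - max u (G 0))
  | 0 => by simp
  | (n+1) => by
    rw [Finset.sum_range_succ, sum_interval G hG u v n,
      glue (G 0) (G n) (G (n+1)) u v (hG (Nat.zero_le n)) (hG (Nat.le_succ n))]

/-- Any coverage profile `q` with `0 ≤ q ≤ 1` and total mass `2` is realized by a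
2-guess strategy. -/
private lemma exists_pmf_covers {X : Type} [Fintype X] (q : X → ℝ)
    (h0 : ∀ x, 0 ≤ q x) (h1 : ∀ x, q x ≤ 1) (hs : ∑ x, q x = 2) :
    ∃ Q : X × X → ℝ, IsPMF Q ∧ ∀ x, covers2 Q x = q x := by
  classical
  set n := Fintype.card X with hn
  set e := Fintype.equivFin X with he
  set q' : ℕ → ℝ := fun i => if h : i < n then q (e.symm ⟨i, h⟩) else 0 with hq'
  set F : ℕ → ℝ := fun k => ∑ i ∈ Finset.range k, q' i with hF
  have hq'0 : ∀ i, 0 ≤ q' i := by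
    intro i; rw [hq']; dsimp only; split
    · exact h0 _
    · exact le_rfl
  have hFmono : Monotone F := fun i j hij =>
    Finset.sum_le_sum_of_subset_of_nonneg (Finset.range_subset_range.2 hij)
      (fun k _ _ => hq'0 k)
  have hF0 : F 0 = 0 := by simp [hF]
  have hq'e : ∀ x : X, q' (e x) = q x := by
    intro x; rw [hq']; dsimp only
    rw [dif_pos (e x).isLt]
    simp
  have hFsucc : ∀ x : X, F ((e x : ℕ) + 1) = F (e x) + q x := by
    intro x
    rw [hF]; dsimp only
    rw [Finset.sum_range_succ, hq'e]
  have hFn : F n = 2 := by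
    rw [hF]; dsimp only
    rw [← Fin.sum_univ_eq_sum_range q' n, ← hs, ← Equiv.sum_comp e.symm q]
    refine Finset.sum_congr rfl (fun i _ => ?_)
    rw [hq']; dsimp only
    rw [dif_pos i.isLt]
  have hFnn : ∀ k, 0 ≤ F k := fun k => hF0 ▸ hFmono (Nat.zero_le k)
  have hFle2 : ∀ k, k ≤ n → F k ≤ 2 := fun k hk => hFn ▸ hFmono hk
  set Q : X × X → ℝ := fun z =>
    max 0 (min (F ((e z.1 : ℕ) + 1)) (F ((e z.2 : ℕ) + 1) - 1)
      - max (F (e z.1)) (F ((e z.2 : ℕ)) - 1)) with hQdef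
  have hQ0 : ∀ z, 0 ≤ Q z := fun z => le_max_left _ _
  set f : ℕ → ℝ := fun i => max 0 (min 1 (F (i+1)) - max (-1) (F i)) with hf
  -- row sums
  have row : ∀ a : X, ∑ b, Q (a, b) = f (e a) := by
    intro a
    have key := sum_interval (fun k => F k - 1)
      (fun i j hij => by simpa using hFmono hij) (F (e a)) (F ((e a : ℕ) + 1)) n
    have reindex : ∑ b, Q (a, b)
        = ∑ j ∈ Finset.range n, max 0 (min (F ((e a : ℕ) + 1)) (F (j+1) - 1)
            - max (F (e a)) (F j - 1)) := by
      rw [← Fin.sum_univ_eq_sum_range]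
      exact Fintype.sum_equiv e _ _ (fun b => rfl)
    rw [reindex, key, hF0, hFn, hf]
    dsimp only
    norm_num
    congr 1
    rw [min_comm (F ((e a : ℕ) + 1)) 1, max_comm (F (e a)) (-1 : ℝ)]
  have col : ∀ b : X, ∑ a, Q (a, b)
      = max 0 (min (F ((e b : ℕ) + 1) - 1) (F n) - max (F (e b) - 1) (F 0)) := by
    intro b
    have key := sum_interval F hFmono (F (e b) - 1) (F ((e b : ℕ) + 1) - 1) n
    have reindex : ∑ a, Q (a, b)
        = ∑ j ∈ Finset.range n, max 0 (min (F ((e b : ℕ) + 1) - 1) (F (j+1))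
            - max (F (e b) - 1) (F j)) := by
      rw [← Fin.sum_univ_eq_sum_range]
      refine Fintype.sum_equiv e _ _ (fun a => ?_)
      rw [hQdef]; dsimp only
      rw [min_comm (F ((e a : ℕ) + 1)), max_comm (F (e a))]
    rw [reindex, key]
  have diag : ∀ x : X, Q (x, x) = 0 := by
    intro x
    apply max_eq_left
    have hs2 := hFsucc x
    have h1x := h1 x
    refine sub_nonpos.2 (le_trans (min_le_right _ _) (le_trans ?_ (le_max_left _ _)))
    dsimp only
    linarith
  -- total mass 1
  have total : ∑ z : X × X, Q z = 1 := by
    rw [Fintype.sum_prod_type]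
    calc ∑ a, ∑ b, Q (a, b) = ∑ a, f (e a) := Finset.sum_congr rfl (fun a _ => row a)
      _ = ∑ j ∈ Finset.range n, f j := by
          rw [← Fin.sum_univ_eq_sum_range]
          exact Fintype.sum_equiv e _ _ (fun a => rfl)
      _ = max 0 (min 1 (F n) - max (-1) (F 0)) := sum_interval F hFmono (-1) 1 n
      _ = 1 := by rw [hF0, hFn]; norm_num
  refine ⟨Q, ⟨hQ0, total⟩, ?_⟩
  intro x
  have step1 : ∀ a, (∑ b, if (a, b).1 = x ∨ (a, b).2 = x then Q (a, b) else 0)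
      = (if a = x then (∑ b, Q (a, b)) - Q (a, x) else 0) + Q (a, x) := by
    intro a
    by_cases ha : a = x
    · subst ha
      simp only [true_or, if_pos rfl, if_true]
      ring
    · simp [ha, Finset.sum_ite_eq']
  have hcov : covers2 Q x = f (e x) + ∑ a, Q (a, x) := by
    rw [covers2, Fintype.sum_prod_type]
    rw [Finset.sum_congr rfl (fun a _ => step1 a), Finset.sum_add_distrib,
      Finset.sum_ite_eq' Finset.univ x]
    simp [row x, diag x]
  rw [hcov, col x, hf]
  have hu0 : 0 ≤ F (e x) := hFnn _
  have hv2 : F ((e x : ℕ) + 1) ≤ 2 := hFle2 _ (Nat.succ_le_of_lt (e x).isLt)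
  have hvq := hFsucc x
  have hq0 := h0 x
  have hq1 := h1 x
  rw [hF0, hFn]
  dsimp only
  simp only [min_def, max_def]
  split_ifs <;> linarith

private lemma coe_sum_ereal {X : Type} [Fintype X] (f : X → ℝ) :
    ((∑ x, f x : ℝ) : EReal) = ∑ x, ((f x : ℝ) : EReal) :=
  map_sum (⟨⟨Real.toEReal, EReal.coe_zero⟩, EReal.coe_add⟩ : ℝ →+ EReal) f Finset.univ

/-- The minimal expected log-loss under 2 guesses equals
`H(X) − h_b(max{1/2, p_max})`. -/
theorem stmt15 {X : Type} [Fintype X] [Nonempty X] (hcard : 3 ≤ Fintype.card X)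
    (P : X → ℝ) (hP : IsPMF P) (hpos : ∀ x, 0 < P x) :
    IsLeast
      {v : EReal | ∃ Q : X × X → ℝ, IsPMF Q ∧
        v = ∑ x, ((P x : ℝ) : EReal) * logLossE (covers2 Q x)}
      ((((∑ x, P x * Real.log (1 / P x)) -
          binEnt (max (1 / 2) (Finset.univ.sup' Finset.univ_nonempty P)) : ℝ) : EReal)) := by
  classical
  obtain ⟨hP0, hP1⟩ := hP
  set pm := Finset.univ.sup' Finset.univ_nonempty P with hpmdef
  obtain ⟨xs, -, hxs⟩ := Finset.exists_mem_eq_sup' Finset.univ_nonempty P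
  rw [← hpmdef] at hxs
  set m := max (1/2 : ℝ) pm with hmdef
  have hpmle : ∀ x, P x ≤ pm := fun x => Finset.le_sup' P (Finset.mem_univ x)
  have hpm_pos : 0 < pm := lt_of_lt_of_le (hpos xs) (hpmle xs)
  have hm_half : (1/2 : ℝ) ≤ m := le_max_left _ _
  have hpm_le_m : pm ≤ m := le_max_right _ _
  have hpair : ∀ x y : X, x ≠ y → P x + P y ≤ 1 := by
    intro x y hxy
    rw [← hP1]
    have h := Finset.sum_le_sum_of_subset_of_nonneg
      (Finset.subset_univ ({x, y} : Finset X)) (fun i _ _ => hP0 i)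
    rwa [Finset.sum_pair hxy] at h
  obtain ⟨y, hy⟩ := Fintype.exists_ne_of_one_lt_card (by omega) xs
  have hpm1 : pm < 1 := by
    have := hpair y xs hy
    have := hpos y
    rw [hxs]; linarith
  have hm1 : m < 1 := max_lt (by norm_num) hpm1
  have h1m : 0 < 1 - m := by linarith
  have hm_pos : 0 < m := by linarith
  have hcase : m = 1/2 ∨ m = pm := max_choice _ _
  set q : X → ℝ := fun x => if x = xs then pm / m else P x / (1 - m) with hq
  have hq_pos : ∀ x, 0 < q x := by
    intro x; rw [hq]; dsimp only; split
    · exact div_pos hpm_pos hm_pos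
    · exact div_pos (hpos x) h1m
  have hq_le1 : ∀ x, q x ≤ 1 := by
    intro x; rw [hq]; dsimp only; split
    · exact div_le_one_of_le₀ hpm_le_m hm_pos.le
    · rename_i hx
      rw [div_le_one h1m]
      rcases hcase with hc | hc
      · have h2 : pm ≤ 1/2 := by rw [← hc]; exact hpm_le_m
        have h3 := hpmle x
        rw [hc]; linarith
      · have h2 := hpair x xs hx
        rw [hc, hxs]; linarith
  have hqsum : ∑ x, q x = 2 := by
    rw [← Finset.add_sum_erase _ q (Finset.mem_univ xs)]
    have herase : ∑ x ∈ Finset.univ.erase xs, q x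
        = (∑ x ∈ Finset.univ.erase xs, P x) / (1 - m) := by
      rw [Finset.sum_div]
      refine Finset.sum_congr rfl (fun x hx => ?_)
      rw [hq]; dsimp only
      rw [if_neg (Finset.ne_of_mem_erase hx)]
    have hPerase : ∑ x ∈ Finset.univ.erase xs, P x = 1 - pm := by
      have := Finset.sum_erase_add Finset.univ P (Finset.mem_univ xs)
      rw [hxs]; linarith
    rw [herase, hPerase]
    have hqxs : q xs = pm / m := by rw [hq]; dsimp only; rw [if_pos rfl]
    rw [hqxs]
    rcases hcase with hc | hc
    · rw [hc]; field_simp; ring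
    · rw [hc]
      rw [div_self hpm_pos.ne', div_self (by linarith : (1:ℝ) - pm ≠ 0)]
      norm_num
  obtain ⟨Q, hQpmf, hQcov⟩ := exists_pmf_covers q (fun x => (hq_pos x).le) hq_le1 hqsum
  -- the value of the candidate
  have hlogq : ∀ x, Real.log (1 / q x)
      = (if x = xs then Real.log m - Real.log pm
          else Real.log (1 - m) - Real.log (P x)) := by
    intro x
    rw [one_div, Real.log_inv, hq]; dsimp only
    split
    · rw [Real.log_div hpm_pos.ne' hm_pos.ne']; ring
    · rename_i hx
      rw [Real.log_div (hpos x).ne' h1m.ne']; ring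
  have hkey : pm * Real.log m + (1 - pm) * Real.log (1 - m)
      = m * Real.log m + (1 - m) * Real.log (1 - m) := by
    rcases hcase with hc | hc
    · rw [hc]; norm_num; ring
    · rw [hc]
  have hval : ∑ x, P x * Real.log (1 / q x)
      = (∑ x, P x * Real.log (1 / P x)) - binEnt m := by
    have expand : ∀ x, P x * Real.log (1 / q x)
        = P x * Real.log (1 / P x)
          + (if x = xs then pm * (Real.log m - Real.log pm) - pm * Real.log (1/pm)
              else P x * Real.log (1 - m)) := by
      intro x
      rw [hlogq x]
      split
      · rename_i hx
        subst hx
        rw [hxs] at *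
        rw [one_div, Real.log_inv]
        ring
      · rw [one_div, Real.log_inv]
        ring
    rw [Finset.sum_congr rfl (fun x _ => expand x), Finset.sum_add_distrib]
    have hsplit : ∑ x, (if x = xs then pm * (Real.log m - Real.log pm) - pm * Real.log (1/pm)
        else P x * Real.log (1 - m))
        = (pm * (Real.log m - Real.log pm) - pm * Real.log (1/pm))
          + (1 - pm) * Real.log (1 - m) := by
      rw [← Finset.add_sum_erase _ _ (Finset.mem_univ xs), if_pos rfl]
      congr 1
      have : ∑ x ∈ Finset.univ.erase xs, (if x = xs then pm * (Real.log m - Real.log pm) - pm * Real.log (1/pm)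
          else P x * Real.log (1 - m)) = ∑ x ∈ Finset.univ.erase xs, P x * Real.log (1 - m) := by
        refine Finset.sum_congr rfl (fun x hx => ?_)
        rw [if_neg (Finset.ne_of_mem_erase hx)]
      rw [this, ← Finset.sum_mul]
      have hPerase : ∑ x ∈ Finset.univ.erase xs, P x = 1 - pm := by
        have := Finset.sum_erase_add Finset.univ P (Finset.mem_univ xs)
        rw [hxs]; linarith
      rw [hPerase]
    rw [hsplit, binEnt, one_div, Real.log_inv]
    nlinarith [hkey]
  constructor
  · -- membership
    refine ⟨Q, hQpmf, ?_⟩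
    have hEsum : ∑ x, ((P x : ℝ) : EReal) * logLossE (covers2 Q x)
        = ((∑ x, P x * Real.log (1 / q x) : ℝ) : EReal) := by
      rw [coe_sum_ereal]
      refine Finset.sum_congr rfl (fun x _ => ?_)
      rw [hQcov x, logLossE, if_neg (hq_pos x).ne', EReal.coe_mul]
    rw [hEsum, hval]
  · -- lower bound
    rintro v ⟨Q2, ⟨hQ2nn, hQ2s⟩, rfl⟩
    classical
    set c : X → ℝ := fun x => covers2 Q2 x with hc
    have hc0 : ∀ x, 0 ≤ c x := by
      intro x
      refine Finset.sum_nonneg (fun z _ => ?_)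
      split
      · exact hQ2nn z
      · exact le_rfl
    have hc1 : ∀ x, c x ≤ 1 := by
      intro x
      calc c x ≤ ∑ z : X × X, Q2 z := by
            refine Finset.sum_le_sum (fun z _ => ?_)
            split
            · exact le_rfl
            · exact hQ2nn z
        _ = 1 := hQ2s
    have hcs : ∑ x, c x ≤ 2 := by
      have swap : ∑ x, c x = ∑ z : X × X, ∑ x, (if z.1 = x ∨ z.2 = x then Q2 z else 0) := by
        rw [hc]; dsimp only [covers2]
        exact Finset.sum_comm
      rw [swap]
      calc ∑ z : X × X, ∑ x, (if z.1 = x ∨ z.2 = x then Q2 z else 0)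
          ≤ ∑ z : X × X, 2 * Q2 z := by
            refine Finset.sum_le_sum (fun z _ => ?_)
            have hle : ∀ x : X, (if z.1 = x ∨ z.2 = x then Q2 z else 0)
                ≤ (if z.1 = x then Q2 z else 0) + (if z.2 = x then Q2 z else 0) := by
              intro x
              by_cases h1 : z.1 = x <;> by_cases h2 : z.2 = x <;>
                simp [h1, h2, hQ2nn z]
            calc (∑ x, if z.1 = x ∨ z.2 = x then Q2 z else 0)
                ≤ ∑ x, ((if z.1 = x then Q2 z else 0) + (if z.2 = x then Q2 z else 0)) :=
                  Finset.sum_le_sum (fun x _ => hle x)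
              _ = 2 * Q2 z := by
                  rw [Finset.sum_add_distrib, Finset.sum_ite_eq, Finset.sum_ite_eq]
                  simp only [Finset.mem_univ, if_true]
                  ring
        _ = 2 := by rw [← Finset.mul_sum, hQ2s, mul_one]
    by_cases hcz : ∀ x, c x ≠ 0
    · have hcpos : ∀ x, 0 < c x := fun x => lt_of_le_of_ne (hc0 x) (Ne.symm (hcz x))
      have hlle : ∀ x, logLossE (c x) = ((Real.log (1 / c x) : ℝ) : EReal) := by
        intro x; rw [logLossE, if_neg (hcz x)]
      have hEsum : ∑ x, ((P x : ℝ) : EReal) * logLossE (covers2 Q2 x)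
          = ((∑ x, P x * Real.log (1 / c x) : ℝ) : EReal) := by
        rw [coe_sum_ereal]
        refine Finset.sum_congr rfl (fun x _ => ?_)
        rw [show covers2 Q2 x = c x from rfl, hlle x, EReal.coe_mul]
      rw [hEsum, EReal.coe_le_coe_iff]
      -- real inequality
      have hbound : ∑ x, P x * (c x / q x) ≤ 1 := by
        have hterm : ∀ x, P x * (c x / q x)
            = (if x = xs then m else 1 - m) * c x := by
          intro x
          rw [hq]; dsimp only
          have hpm' : pm ≠ 0 := hpm_pos.ne'
          have hm' : m ≠ 0 := hm_pos.ne'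
          have h1m' : (1:ℝ) - m ≠ 0 := h1m.ne'
          have hPx : P x ≠ 0 := (hpos x).ne'
          split
          · rename_i hxx
            subst hxx
            rw [← hxs]
            field_simp
          · field_simp
        rw [Finset.sum_congr rfl (fun x _ => hterm x)]
        rw [← Finset.add_sum_erase _ _ (Finset.mem_univ xs), if_pos rfl]
        have herase : ∑ x ∈ Finset.univ.erase xs, (if x = xs then m else 1 - m) * c x
            = (1 - m) * ∑ x ∈ Finset.univ.erase xs, c x := by
          rw [Finset.mul_sum]
          refine Finset.sum_congr rfl (fun x hx => ?_)
          rw [if_neg (Finset.ne_of_mem_erase hx)]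
        rw [herase]
        have hsum_er : ∑ x ∈ Finset.univ.erase xs, c x = (∑ x, c x) - c xs := by
          have := Finset.sum_erase_add Finset.univ c (Finset.mem_univ xs)
          linarith
        rw [hsum_er]
        have h1 := hc1 xs
        have h2 := hc0 xs
        nlinarith [hcs]
      have hgibbs : ∑ x, P x * Real.log (1 / q x) ≤ ∑ x, P x * Real.log (1 / c x) := by
        have hdiff : ∑ x, (P x * Real.log (1 / q x) - P x * Real.log (1 / c x))
            ≤ 0 := by
          calc ∑ x, (P x * Real.log (1 / q x) - P x * Real.log (1 / c x))
              = ∑ x, P x * Real.log (c x / q x) := by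
                refine Finset.sum_congr rfl (fun x _ => ?_)
                rw [one_div, one_div, Real.log_inv, Real.log_inv,
                  Real.log_div (hcz x) (hq_pos x).ne']
                ring
            _ ≤ ∑ x, P x * (c x / q x - 1) := by
                refine Finset.sum_le_sum (fun x _ => ?_)
                exact mul_le_mul_of_nonneg_left
                  (Real.log_le_sub_one_of_pos (div_pos (hcpos x) (hq_pos x))) (hP0 x)
            _ = (∑ x, P x * (c x / q x)) - ∑ x, P x := by
                rw [← Finset.sum_sub_distrib]
                exact Finset.sum_congr rfl (fun x _ => by ring)
            _ ≤ 0 := by rw [hP1]; linarith [hbound]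
        rw [Finset.sum_sub_distrib] at hdiff
        linarith
      rw [← hval] at *
      linarith [hgibbs]
    · push_neg at hcz
      obtain ⟨x0, hx0⟩ := hcz
      have hnonneg : ∀ x : X, (0 : EReal) ≤ ((P x : ℝ) : EReal) * logLossE (covers2 Q2 x) := by
        intro x
        apply mul_nonneg
        · exact_mod_cast hP0 x
        · rw [logLossE]
          split
          · exact le_top
          · rename_i h
            have hcx : 0 < c x := lt_of_le_of_ne (hc0 x) (Ne.symm h)
            have : (0:ℝ) ≤ Real.log (1 / c x) :=
              Real.log_nonneg ((le_div_iff₀ hcx).2 (by rw [one_mul]; exact hc1 x))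
            exact_mod_cast this
      have htop : ((P x0 : ℝ) : EReal) * logLossE (covers2 Q2 x0) = ⊤ := by
        rw [show covers2 Q2 x0 = c x0 from rfl, hx0, logLossE, if_pos rfl]
        exact EReal.coe_mul_top_of_pos (hpos x0)
      have : (⊤ : EReal) ≤ ∑ x, ((P x : ℝ) : EReal) * logLossE (covers2 Q2 x) := by
        rw [← htop]
        exact Finset.single_le_sum (fun x _ => hnonneg x) (Finset.mem_univ x0)
      exact le_trans le_top this
end

section
/- Let 𝒳={x_1,…,x_n} be a finite set, let k be a positive integer, and let (t_1,…,t_n)∈ℝ^n satisfy Σ_{i=1}^n t_i = k. Then there exists a pmf Q on 𝒳^k such that Q({(a_1,…,a_k)∈𝒳^k : a_j=x_i for some j}) = t_i for every i∈{1,…,n} if and only if 0 ≤ t_i ≤ 1 for every i∈{1,…,n}. -/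
open Finset

open Classical

lemma coversG_mix {U : Type*} [Fintype U] {k : ℕ} (Q1 Q2 : (Fin k → U) → ℝ) (c1 c2 : ℝ)
    (u : U) : coversG (fun a => c1 * Q1 a + c2 * Q2 a) u
      = c1 * coversG Q1 u + c2 * coversG Q2 u := by
  unfold coversG
  rw [Finset.mul_sum, Finset.mul_sum, ← Finset.sum_add_distrib]
  apply Finset.sum_congr rfl
  intro a _
  by_cases h : ∃ j, a j = u <;> simp [h]

lemma base_case (n k : ℕ) (t : Fin n → ℝ) (hsum : ∑ i, t i = k)
    (h01 : ∀ i, t i = 0 ∨ t i = 1) :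
    ∃ Q : (Fin k → Fin n) → ℝ, IsPMF Q ∧ ∀ i, coversG Q i = t i := by
  set S : Finset (Fin n) := univ.filter (fun i => t i = 1) with hS
  have hcard : S.card = k := by
    have h1 : ∑ i, t i = (S.card : ℝ) := by
      rw [Finset.card_filter]
      push_cast
      apply Finset.sum_congr rfl
      intro i _
      rcases h01 i with h | h <;> simp [h]
    have : (S.card : ℝ) = (k : ℝ) := by rw [← h1, hsum]
    exact_mod_cast this
  let e := S.orderIsoOfFin hcard
  let a : Fin k → Fin n := fun j => (e j : Fin n)
  have hcov : ∀ i, (∃ j, a j = i) ↔ t i = 1 := by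
    intro i
    constructor
    · rintro ⟨j, rfl⟩
      exact (Finset.mem_filter.mp (e j).2).2
    · intro h
      have hi : i ∈ S := Finset.mem_filter.mpr ⟨Finset.mem_univ i, h⟩
      obtain ⟨j, hj⟩ := e.surjective ⟨i, hi⟩
      exact ⟨j, congrArg Subtype.val hj⟩
  refine ⟨fun b => if b = a then 1 else 0, ⟨?_, ?_⟩, ?_⟩
  · intro b; dsimp only; split <;> norm_num
  · simp
  intro i
  unfold coversG
  rw [Finset.sum_eq_single a]
  · by_cases h : ∃ j, a j = i
    · simp [h, (hcov i).mp h]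
    · have : t i = 0 := by
        rcases h01 i with h0 | h1
        · exact h0
        · exact absurd ((hcov i).mpr h1) h
      simp [h, this]
  · intro b _ hb
    simp [hb]
  · simp

lemma exists_pmf (n k : ℕ) :
    ∀ m : ℕ, ∀ t : Fin n → ℝ,
      (univ.filter (fun i => t i ≠ 0 ∧ t i ≠ 1)).card ≤ m →
      ∑ i, t i = k → (∀ i, 0 ≤ t i ∧ t i ≤ 1) →
      ∃ Q : (Fin k → Fin n) → ℝ, IsPMF Q ∧ ∀ i, coversG Q i = t i := by
  intro m
  induction m with
  | zero =>
      intro t hcard hsum _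
      apply base_case n k t hsum
      intro i
      by_contra h
      push_neg at h
      have : i ∈ univ.filter (fun i => t i ≠ 0 ∧ t i ≠ 1) := by
        simp [h.1, h.2]
      have := Finset.card_pos.mpr ⟨i, this⟩
      omega
  | succ m ih =>
      intro t hcard hsum hb
      set F : Finset (Fin n) := univ.filter (fun i => t i ≠ 0 ∧ t i ≠ 1) with hF
      by_cases hFe : F = ∅
      · apply base_case n k t hsum
        intro i
        by_contra h
        push_neg at h
        have : i ∈ F := by simp [hF, h.1, h.2]
        simp [hFe] at this
      · obtain ⟨i, hi⟩ := Finset.nonempty_iff_ne_empty.mpr hFe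
        have hti : t i ≠ 0 ∧ t i ≠ 1 := by simpa [hF] using hi
        -- find a second fractional coordinate
        have hj : ∃ j, j ≠ i ∧ t j ≠ 0 ∧ t j ≠ 1 := by
          by_contra h
          push_neg at h
          have h01 : ∀ l, l ≠ i → t l = 0 ∨ t l = 1 := by
            intro l hl
            by_cases h0 : t l = 0
            · exact Or.inl h0
            · exact Or.inr (h l hl h0)
          -- sum over erase i is a natural number
          set m' : ℕ := ((univ.erase i).filter (fun l => t l = 1)).card with hm'
          have hse : ∑ l ∈ univ.erase i, t l = (m' : ℝ) := by
            rw [hm', Finset.card_filter]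
            push_cast
            apply Finset.sum_congr rfl
            intro l hl
            rcases h01 l (Finset.ne_of_mem_erase hl) with h | h <;> simp [h]
          have hti' : t i = (k : ℝ) - m' := by
            have := Finset.add_sum_erase univ t (Finset.mem_univ i)
            rw [hse] at this
            rw [← hsum, ← this]
            ring
          have h0 : 0 < t i := lt_of_le_of_ne (hb i).1 (Ne.symm hti.1)
          have h1 : t i < 1 := lt_of_le_of_ne (hb i).2 hti.2
          rw [hti'] at h0 h1
          have hmk : (m' : ℝ) < k := by linarith
          have hkm : (k : ℝ) < m' + 1 := by linarith
          have : m' < k := by exact_mod_cast hmk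
          have : k < m' + 1 := by exact_mod_cast hkm
          omega
        obtain ⟨j, hji, htj⟩ := hj
        have h0i : 0 < t i := lt_of_le_of_ne (hb i).1 (Ne.symm hti.1)
        have h1i : t i < 1 := lt_of_le_of_ne (hb i).2 hti.2
        have h0j : 0 < t j := lt_of_le_of_ne (hb j).1 (Ne.symm htj.1)
        have h1j : t j < 1 := lt_of_le_of_ne (hb j).2 htj.2
        set ε : ℝ := min (1 - t i) (t j) with hε
        set δ : ℝ := min (t i) (1 - t j) with hδ
        have hεpos : 0 < ε := lt_min (by linarith) h0j
        have hδpos : 0 < δ := lt_min h0i (by linarith)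
        set t1 : Fin n → ℝ := fun l => if l = i then t i + ε else if l = j then t j - ε else t l
          with ht1
        set t2 : Fin n → ℝ := fun l => if l = i then t i - δ else if l = j then t j + δ else t l
          with ht2
        have hij : i ≠ j := fun h => hji h.symm
        -- sums are preserved
        have hsum1 : ∑ l, t1 l = (k : ℝ) := by
          rw [← hsum]
          have : ∀ l, t1 l = t l + ((if l = i then ε else 0) + (if l = j then -ε else 0)) := by
            intro l
            simp only [ht1]
            split_ifs with h1 h2 h2
            · exact absurd (h1.symm.trans h2) hij
            · rw [h1]; ring
            · rw [h2]; ring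
            · ring
          simp only [this, Finset.sum_add_distrib, Finset.sum_ite_eq', Finset.mem_univ, if_true]
          ring
        have hsum2 : ∑ l, t2 l = (k : ℝ) := by
          rw [← hsum]
          have : ∀ l, t2 l = t l + ((if l = i then -δ else 0) + (if l = j then δ else 0)) := by
            intro l
            simp only [ht2]
            split_ifs with h1 h2 h2
            · exact absurd (h1.symm.trans h2) hij
            · rw [h1]; ring
            · rw [h2]; ring
            · ring
          simp only [this, Finset.sum_add_distrib, Finset.sum_ite_eq', Finset.mem_univ, if_true]
          ring
        -- bounds preserved
        have hεi : ε ≤ 1 - t i := min_le_left _ _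
        have hεj : ε ≤ t j := min_le_right _ _
        have hδi : δ ≤ t i := min_le_left _ _
        have hδj : δ ≤ 1 - t j := min_le_right _ _
        have hb1 : ∀ l, 0 ≤ t1 l ∧ t1 l ≤ 1 := by
          intro l
          simp only [ht1]
          split_ifs with h1 h2
          · constructor <;> linarith
          · constructor <;> linarith
          · exact hb l
        have hb2 : ∀ l, 0 ≤ t2 l ∧ t2 l ≤ 1 := by
          intro l
          simp only [ht2]
          split_ifs with h1 h2
          · constructor <;> linarith
          · constructor <;> linarith
          · exact hb l
        -- fractional sets shrink
        have hsub : ∀ (s : Fin n → ℝ), (∀ l, l ≠ i → l ≠ j → s l = t l) →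
            (univ.filter (fun x => s x ≠ 0 ∧ s x ≠ 1)) ⊆ insert i (insert j F) := by
          intro s hs x hx
          simp only [Finset.mem_filter, Finset.mem_univ, true_and] at hx
          by_cases h1 : x = i
          · simp [h1]
          · by_cases h2 : x = j
            · simp [h2]
            · rw [hs x h1 h2] at hx
              simp [Finset.mem_insert, hF, hx.1, hx.2]
        have hiF : i ∈ F := hi
        have hjF : j ∈ F := by simp [hF, htj.1, htj.2]
        have hins : insert i (insert j F) = F := by
          rw [Finset.insert_eq_self.mpr hjF, Finset.insert_eq_self.mpr hiF]
        have hcard1 : (univ.filter (fun x => t1 x ≠ 0 ∧ t1 x ≠ 1)).card ≤ m := by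
          have hsub1 : (univ.filter (fun x => t1 x ≠ 0 ∧ t1 x ≠ 1)) ⊆ F := by
            have := hsub t1 (fun l h1 h2 => by simp [ht1, h1, h2])
            rwa [hins] at this
          have hdrop : i ∉ (univ.filter (fun x => t1 x ≠ 0 ∧ t1 x ≠ 1)) ∨
              j ∉ (univ.filter (fun x => t1 x ≠ 0 ∧ t1 x ≠ 1)) := by
            rcases min_cases (1 - t i) (t j) with ⟨h, _⟩ | ⟨h, _⟩
            · left
              simp only [Finset.mem_filter, Finset.mem_univ, true_and, not_and, not_not]
              intro _
              show t1 i = 1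
              have e1 : t1 i = t i + ε := by simp [ht1]
              rw [e1, hε, h]; ring
            · right
              simp only [Finset.mem_filter, Finset.mem_univ, true_and, not_and]
              intro hc
              refine absurd ?_ hc
              show t1 j = 0
              have e1 : t1 j = t j - ε := by simp [ht1, hji]
              rw [e1, hε, h]; ring
          have hss : (univ.filter (fun x => t1 x ≠ 0 ∧ t1 x ≠ 1)) ⊂ F := by
            rcases hdrop with h | h
            · exact (Finset.ssubset_iff_of_subset hsub1).mpr ⟨i, hiF, h⟩
            · exact (Finset.ssubset_iff_of_subset hsub1).mpr ⟨j, hjF, h⟩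
          have := Finset.card_lt_card hss
          omega
        have hcard2 : (univ.filter (fun x => t2 x ≠ 0 ∧ t2 x ≠ 1)).card ≤ m := by
          have hsub2 : (univ.filter (fun x => t2 x ≠ 0 ∧ t2 x ≠ 1)) ⊆ F := by
            have := hsub t2 (fun l h1 h2 => by simp [ht2, h1, h2])
            rwa [hins] at this
          have hdrop : i ∉ (univ.filter (fun x => t2 x ≠ 0 ∧ t2 x ≠ 1)) ∨
              j ∉ (univ.filter (fun x => t2 x ≠ 0 ∧ t2 x ≠ 1)) := by
            rcases min_cases (t i) (1 - t j) with ⟨h, _⟩ | ⟨h, _⟩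
            · left
              simp only [Finset.mem_filter, Finset.mem_univ, true_and, not_and]
              intro hc
              refine absurd ?_ hc
              show t2 i = 0
              have e1 : t2 i = t i - δ := by simp [ht2]
              rw [e1, hδ, h]; ring
            · right
              simp only [Finset.mem_filter, Finset.mem_univ, true_and, not_and, not_not]
              intro _
              show t2 j = 1
              have e1 : t2 j = t j + δ := by simp [ht2, hji]
              rw [e1, hδ, h]; ring
          have hss : (univ.filter (fun x => t2 x ≠ 0 ∧ t2 x ≠ 1)) ⊂ F := by
            rcases hdrop with h | h
            · exact (Finset.ssubset_iff_of_subset hsub2).mpr ⟨i, hiF, h⟩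
            · exact (Finset.ssubset_iff_of_subset hsub2).mpr ⟨j, hjF, h⟩
          have := Finset.card_lt_card hss
          omega
        obtain ⟨Q1, hQ1, hc1⟩ := ih t1 hcard1 hsum1 hb1
        obtain ⟨Q2, hQ2, hc2⟩ := ih t2 hcard2 hsum2 hb2
        set lam : ℝ := δ / (ε + δ) with hlam
        have hεδ : 0 < ε + δ := by linarith
        have hlam0 : 0 ≤ lam := div_nonneg (le_of_lt hδpos) (le_of_lt hεδ)
        have hlam1 : lam ≤ 1 := by
          rw [hlam, div_le_one hεδ]; linarith
        refine ⟨fun a => lam * Q1 a + (1 - lam) * Q2 a, ⟨?_, ?_⟩, ?_⟩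
        · intro a
          exact add_nonneg (mul_nonneg hlam0 (hQ1.1 a))
            (mul_nonneg (by linarith) (hQ2.1 a))
        · rw [Finset.sum_add_distrib, ← Finset.mul_sum, ← Finset.mul_sum, hQ1.2, hQ2.2]
          ring
        · intro l
          rw [coversG_mix, hc1, hc2]
          -- convex combination recovers t
          have hne : ε + δ ≠ 0 := ne_of_gt hεδ
          simp only [ht1, ht2]
          split_ifs with h1 h2
          · rw [h1, hlam]; field_simp; ring
          · rw [h2, hlam]; field_simp; ring
          · ring

/-- (Admissibility of cover vectors; Farkas-type lemma.)
A vector `(t_1,…,t_n)` with `∑_i t_i = k` arises as the covering-probability vector of some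
`k`-guess strategy (a pmf on `𝒳^k`) if and only if `0 ≤ t_i ≤ 1` for every `i`. -/
theorem stmt18 (n k : ℕ) (hk : 0 < k) (t : Fin n → ℝ) (hsum : ∑ i, t i = k) :
    (∃ Q : (Fin k → Fin n) → ℝ, IsPMF Q ∧ ∀ i, coversG Q i = t i) ↔
      ∀ i, 0 ≤ t i ∧ t i ≤ 1 := by
  constructor
  · rintro ⟨Q, ⟨hpos, hQsum⟩, hc⟩ i
    constructor
    · rw [← hc i]
      apply Finset.sum_nonneg
      intro a _
      split
      · exact hpos a
      · exact le_refl 0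
    · rw [← hc i, ← hQsum]
      apply Finset.sum_le_sum
      intro a _
      split
      · exact le_refl _
      · exact hpos a
  · intro hb
    exact exists_pmf n k _ t le_rfl hsum hb
end

section
/- Let P_{XY} be a joint pmf on finite alphabets 𝒳×𝒴, and let y∈𝒴 satisfy P_Y(y)>0 and P_{X|Y=y} ≠ P_X. Then sup over finite alphabets 𝒰 and channels P_{U|X} from 𝒳 to 𝒰 of [ H(P_U) − H(P_{U|Y=y}) ] = ∞, i.e., the quantity H(P_U) − H(P_{U|Y=y}) is unbounded above; here P_U(u)=Σ_x P_X(x)P_{U|X}(u|x), P_{U|Y=y}(u)=Σ_x P_{X|Y}(x|y)P_{U|X}(u|x), and H denotes Shannon entropy. -/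
open Finset

/-- If `P_Y(y) > 0` and `P_{X|Y=y} ≠ P_X`, then
`sup_{U, P_{U|X}} (H(P_U) − H(P_{U|Y=y})) = ∞`, i.e. the quantity is unbounded above. -/
theorem stmt19 {X Y : Type} [Fintype X] [Fintype Y]
    (P : X → Y → ℝ) (hP : IsPMF (fun z : X × Y => P z.1 z.2))
    (y : Y) (hy : 0 < ∑ x, P x y)
    (hne : (fun x => P x y / ∑ x', P x' y) ≠ (fun x => ∑ y', P x y')) :
    ∀ M : ℝ, ∃ (U : Type) (iU : Fintype U) (K : X → U → ℝ),
      @IsChannel X U iU K ∧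
      M < @entropy U iU (push (fun x => ∑ y', P x y') K) -
          @entropy U iU (push (fun x => P x y / ∑ x', P x' y) K) := by
  intro M
  obtain ⟨hPnn, hPsum⟩ := hP
  set Q : X → ℝ := fun x => P x y / ∑ x', P x' y with hQdef
  set Px : X → ℝ := fun x => ∑ y', P x y' with hPxdef
  have hQnn : ∀ x, 0 ≤ Q x := fun x => div_nonneg (hPnn (x, y)) hy.le
  have hPxnn : ∀ x, 0 ≤ Px x := fun x => Finset.sum_nonneg fun y' _ => hPnn (x, y')
  have hQsum : ∑ x, Q x = 1 := by
    simp only [hQdef]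
    rw [← Finset.sum_div, div_self hy.ne']
  have hPxsum : ∑ x, Px x = 1 := by
    simp only [hPxdef]
    rw [← hPsum, Fintype.sum_prod_type]
  -- find x₀ with Q x₀ < Px x₀
  have hx0 : ∃ x₀, Q x₀ < Px x₀ := by
    by_contra h
    push_neg at h
    obtain ⟨x₁, hx₁⟩ := Function.ne_iff.mp hne
    have hlt : ∑ x, Px x < ∑ x, Q x :=
      Finset.sum_lt_sum (fun x _ => h x)
        ⟨x₁, Finset.mem_univ _, lt_of_le_of_ne (h x₁) (Ne.symm hx₁)⟩
    rw [hQsum, hPxsum] at hlt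
    exact lt_irrefl _ hlt
  obtain ⟨x₀, hpq⟩ := hx0
  obtain ⟨p, hp⟩ : ∃ r, Px x₀ = r := ⟨_, rfl⟩
  obtain ⟨q, hq⟩ : ∃ r, Q x₀ = r := ⟨_, rfl⟩
  rw [hp, hq] at hpq
  have hp0 : 0 < p := lt_of_le_of_lt (hq ▸ hQnn x₀) hpq
  have hq0 : 0 ≤ q := hq ▸ hQnn x₀
  -- constants
  set C : ℝ := -((1 - p) * Real.log (1 - p)) - p * Real.log p
      + ((1 - q) * Real.log (1 - q)) + q * Real.log q with hC
  set t : ℝ := (M - C) / (p - q) with ht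
  set n : ℕ := ⌈Real.exp t⌉₊ + 1 with hn
  have hnpos : 0 < n := Nat.succ_pos _
  have hnR : (0 : ℝ) < (n : ℝ) := by exact_mod_cast hnpos
  have hnne : ((n : ℝ)) ≠ 0 := hnR.ne'
  have htlog : t < Real.log n := by
    have h1 : Real.exp t < (n : ℝ) := by
      have h0 := Nat.le_ceil (Real.exp t)
      have h2 : ((⌈Real.exp t⌉₊ : ℝ)) < (n : ℝ) := by
        rw [hn]; push_cast; linarith
      linarith
    exact (Real.lt_log_iff_exp_lt hnR).mpr h1
  classical
  set K : X → Option (Fin n) → ℝ :=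
    fun x u => if x = x₀ then (if u = none then 0 else (1 : ℝ) / n)
      else (if u = none then 1 else 0) with hK
  refine ⟨Option (Fin n), inferInstance, K, ?_, ?_⟩
  · intro x
    by_cases hx : x = x₀
    · constructor
      · intro u; simp only [hK]; split_ifs <;> positivity
      · simp [hK, hx, Fintype.sum_option, Finset.sum_const, Finset.card_univ, hnne]
    · constructor
      · intro u; simp only [hK]; split_ifs <;> norm_num
      · simp [hK, hx, Fintype.sum_option]
  · -- entropy computation
    have hnone : ∀ (R : X → ℝ), (∑ x, R x = 1) → push R K none = 1 - R x₀ := by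
      intro R hR
      have hterm : ∀ x, R x * K x none = R x - (if x = x₀ then R x else 0) := by
        intro x
        by_cases hx : x = x₀ <;> simp [hK, hx]
      simp only [push, hterm, Finset.sum_sub_distrib, hR, Finset.sum_ite_eq',
        Finset.mem_univ, if_true]
    have hsome : ∀ (R : X → ℝ) (i : Fin n), push R K (some i) = R x₀ / n := by
      intro R i
      have hterm : ∀ x, R x * K x (some i) = (if x = x₀ then R x₀ / n else 0) := by
        intro x
        by_cases hx : x = x₀ <;> simp [hK, hx] <;> ring
      simp only [push, hterm, Finset.sum_ite_eq', Finset.mem_univ, if_true]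
    have hent : ∀ (R : X → ℝ), (∑ x, R x = 1) →
        entropy (push R K) =
          -((1 - R x₀) * Real.log (1 - R x₀)) - R x₀ * Real.log (R x₀ / n) := by
      intro R hR
      unfold entropy
      rw [Fintype.sum_option, hnone R hR]
      have hterm : ∀ i : Fin n, push R K (some i) * Real.log (push R K (some i))
          = R x₀ / n * Real.log (R x₀ / n) := by
        intro i; rw [hsome R i]
      rw [Finset.sum_congr rfl (fun i _ => hterm i), Finset.sum_const,
        Finset.card_univ, Fintype.card_fin, nsmul_eq_mul]
      have hmul : (n : ℝ) * (R x₀ / n * Real.log (R x₀ / n))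
          = R x₀ * Real.log (R x₀ / n) := by
        field_simp
      rw [hmul]; ring
    have hentP := hent Px hPxsum
    have hentQ := hent Q hQsum
    rw [hp] at hentP
    rw [hq] at hentQ
    rw [hentP, hentQ]
    have hlogp : Real.log (p / n) = Real.log p - Real.log n :=
      Real.log_div hp0.ne' hnne
    have hlogq : q * Real.log (q / n) = q * Real.log q - q * Real.log n := by
      rcases eq_or_lt_of_le hq0 with h0 | h0
      · simp [← h0]
      · rw [Real.log_div h0.ne' hnne]; ring
    rw [hlogp, hlogq]
    have hkey : M - C < (p - q) * Real.log n := by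
      have hd : 0 < p - q := sub_pos.mpr hpq
      have h3 := (div_lt_iff₀ hd).mp htlog
      linarith
    have hgoal_eq : (-((1 - p) * Real.log (1 - p)) - p * (Real.log p - Real.log n))
        - (-((1 - q) * Real.log (1 - q)) - (q * Real.log q - q * Real.log n))
        = C + (p - q) * Real.log n := by
      rw [hC]; ring
    rw [hgoal_eq]
    linarith
end
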